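/- arXiv:2006.06659 — 11 statements merged into one kernel-verified Lean document; each statement's English description precedes it below -/
import Mathlib

section
/- Let d ≥ 3, let H be a d×d positive semidefinite Hermitian complex matrix whose smallest eigenvalue equals 0 (a 'grounded Hamiltonian'), let E > 0, and let W be an arbitrary d×d complex matrix. Then the infimum of |Tr(ρW)| over all density matrices ρ (d×d positive semidefinite Hermitian with Tr ρ = 1) satisfying Tr(ρH) ≤ E equals the infimum of |⟨ψ, Wψ⟩| over all unit vectors ψ ∈ ℂ^d satisfying ⟨ψ, Hψ⟩ ≤ E. -/
open Matrix
open scoped ComplexOrder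

noncomputable def fbl (P Q R S : ℂ) (x y z : ℝ) : ℂ :=
  ((1 + (z:ℂ))/2) * P + (((x:ℂ) + (y:ℂ)*Complex.I)/2) * Q
    + (((x:ℂ) - (y:ℂ)*Complex.I)/2) * R + ((1 - (z:ℂ))/2) * S

lemma dep3 (B1 B2 B3 : ℂ) : ∃ u1 u2 u3 : ℝ,
    (u1:ℂ)*B1 + (u2:ℂ)*B2 + (u3:ℂ)*B3 = 0 ∧ 0 < u1^2 + u2^2 + u3^2 := by
  have hni : ¬ LinearIndependent ℝ ![B1, B2, B3] := by
    intro hli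
    have := hli.fintype_card_le_finrank
    simp [Complex.finrank_real_complex] at this
  obtain ⟨g, hg, i0, hi0⟩ := Fintype.not_linearIndependent_iff.mp hni
  refine ⟨g 0, g 1, g 2, ?_, ?_⟩
  · have := hg
    rw [Fin.sum_univ_three] at this
    simpa [Complex.real_smul] using this
  · have h0 : 0 < g i0 ^ 2 := lt_of_le_of_ne (sq_nonneg _) (Ne.symm (pow_ne_zero 2 hi0))
    have hle : g i0 ^ 2 ≤ g 0 ^ 2 + g 1 ^ 2 + g 2 ^ 2 := by
      have e : i0 = 0 ∨ i0 = 1 ∨ i0 = 2 := by fin_cases i0 <;> decide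
      rcases e with e | e | e <;> subst e <;>
        nlinarith [sq_nonneg (g 0), sq_nonneg (g 1), sq_nonneg (g 2)]
    linarith

lemma quad_pick (a b c0 γ : ℝ) (ha : 0 < a) (hc0 : c0 ≤ 0) :
    ∃ t : ℝ, a*t^2 + b*t + c0 = 0 ∧ t*γ ≤ 0 := by
  have hane : a ≠ 0 := ne_of_gt ha
  have hdisc : 0 ≤ b^2 - 4*a*c0 := by nlinarith [sq_nonneg b]
  have hD2 : (Real.sqrt (b^2 - 4*a*c0))^2 = b^2 - 4*a*c0 := Real.sq_sqrt hdisc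
  set D := Real.sqrt (b^2 - 4*a*c0) with hD
  have hDnn : 0 ≤ D := Real.sqrt_nonneg _
  have hDb : |b| ≤ D := by
    rw [hD, ← Real.sqrt_sq_eq_abs]
    exact Real.sqrt_le_sqrt (by nlinarith)
  have key : ∀ s : ℝ, s^2 = b^2 - 4*a*c0 → a*((-b+s)/(2*a))^2 + b*((-b+s)/(2*a)) + c0 = 0 := by
    intro s hs
    have h1 : a*((-b+s)/(2*a))^2 + b*((-b+s)/(2*a)) + c0 = (s^2 - (b^2 - 4*a*c0))/(4*a) := by
      field_simp
      ring
    rw [h1, hs]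
    simp
  rcases le_or_gt 0 γ with hsgn | hsgn
  · refine ⟨(-b + -D)/(2*a), key (-D) (by rw [neg_sq]; exact hD2), ?_⟩
    have hnum : -b + -D ≤ 0 := by linarith [neg_abs_le b]
    have ht0 : (-b + -D)/(2*a) ≤ 0 := div_nonpos_of_nonpos_of_nonneg hnum (by linarith)
    exact mul_nonpos_iff.mpr (Or.inr ⟨ht0, hsgn⟩)
  · refine ⟨(-b + D)/(2*a), key D hD2, ?_⟩
    have hnum : 0 ≤ -b + D := by linarith [neg_abs_le b, le_abs_self b]
    have ht0 : 0 ≤ (-b + D)/(2*a) := div_nonneg hnum (by linarith)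
    exact mul_nonpos_iff.mpr (Or.inl ⟨ht0, le_of_lt hsgn⟩)

lemma plane_find (P Q R S P' Q' R' S' : ℂ) (x2 y2 z2 : ℝ) (hs2 : x2^2 + y2^2 + z2^2 = 1)
    (q : ℝ) (hq0 : 0 ≤ q) (hq1 : q ≤ 1) :
    ∃ x y z : ℝ, x^2 + y^2 + z^2 = 1 ∧
      (fbl P Q R S x y z).re ≤ q * (fbl P Q R S 0 0 1).re + (1-q) * (fbl P Q R S x2 y2 z2).re ∧
      fbl P' Q' R' S' x y z = (q:ℂ) * fbl P' Q' R' S' 0 0 1 + (1-(q:ℂ)) * fbl P' Q' R' S' x2 y2 z2 := by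
  obtain ⟨u1, u2, u3, hdep, hupos⟩ := dep3 ((Q'+R')/2) ((Complex.I*(Q'-R'))/2) ((P'-S')/2)
  have hz2le : z2 ≤ 1 := by nlinarith [sq_nonneg x2, sq_nonneg y2, sq_nonneg (z2-1)]
  obtain ⟨t, hroot, htγ⟩ := quad_pick (u1^2 + u2^2 + u3^2)
      (2*(((1-q)*x2)*u1 + ((1-q)*y2)*u2 + (q + (1-q)*z2)*u3))
      (((1-q)*x2)^2 + ((1-q)*y2)^2 + (q + (1-q)*z2)^2 - 1)
      ((((u1:ℂ) + (u2:ℂ)*Complex.I)/2 * Q + (((u1:ℂ) - (u2:ℂ)*Complex.I)/2) * R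
        + ((u3:ℂ)/2) * (P - S)).re)
      hupos
      (by nlinarith [mul_nonneg hq0 (sub_nonneg.mpr hq1)])
  refine ⟨(1-q)*x2 + t*u1, (1-q)*y2 + t*u2, (q + (1-q)*z2) + t*u3, by linear_combination hroot, ?_, ?_⟩
  · have hshift : fbl P Q R S ((1-q)*x2 + t*u1) ((1-q)*y2 + t*u2) ((q + (1-q)*z2) + t*u3)
        = fbl P Q R S ((1-q)*x2) ((1-q)*y2) (q + (1-q)*z2)
          + (t:ℂ) * ((((u1:ℂ) + (u2:ℂ)*Complex.I)/2) * Q + (((u1:ℂ) - (u2:ℂ)*Complex.I)/2) * R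
            + ((u3:ℂ)/2) * (P - S)) := by
      simp only [fbl]; push_cast; ring
    have hconv : fbl P Q R S ((1-q)*x2) ((1-q)*y2) (q + (1-q)*z2)
        = (q:ℂ) * fbl P Q R S 0 0 1 + (1-(q:ℂ)) * fbl P Q R S x2 y2 z2 := by
      simp only [fbl]; push_cast; ring
    have hre1 : (fbl P Q R S ((1-q)*x2 + t*u1) ((1-q)*y2 + t*u2) ((q + (1-q)*z2) + t*u3)).re
        = (fbl P Q R S ((1-q)*x2) ((1-q)*y2) (q + (1-q)*z2)).re
          + t * ((((u1:ℂ) + (u2:ℂ)*Complex.I)/2 * Q + (((u1:ℂ) - (u2:ℂ)*Complex.I)/2) * R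
            + ((u3:ℂ)/2) * (P - S)).re) := by
      rw [hshift]
      simp [Complex.add_re, Complex.mul_re]
    have hre2 : (fbl P Q R S ((1-q)*x2) ((1-q)*y2) (q + (1-q)*z2)).re
        = q * (fbl P Q R S 0 0 1).re + (1-q) * (fbl P Q R S x2 y2 z2).re := by
      rw [hconv]
      simp [Complex.add_re, Complex.mul_re, Complex.sub_re]
    rw [hre1, hre2]
    linarith
  · have hshift : fbl P' Q' R' S' ((1-q)*x2 + t*u1) ((1-q)*y2 + t*u2) ((q + (1-q)*z2) + t*u3)
        = fbl P' Q' R' S' ((1-q)*x2) ((1-q)*y2) (q + (1-q)*z2)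
          + (t:ℂ) * ((u1:ℂ)*((Q'+R')/2) + (u2:ℂ)*((Complex.I*(Q'-R'))/2) + (u3:ℂ)*((P'-S')/2)) := by
      simp only [fbl]; push_cast; ring
    have hconv : fbl P' Q' R' S' ((1-q)*x2) ((1-q)*y2) (q + (1-q)*z2)
        = (q:ℂ) * fbl P' Q' R' S' 0 0 1 + (1-(q:ℂ)) * fbl P' Q' R' S' x2 y2 z2 := by
      simp only [fbl]; push_cast; ring
    rw [hshift, hdep, hconv]
    ring

lemma bloch_exists (x y z : ℝ) (h : x^2 + y^2 + z^2 = 1) :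
    ∃ α β : ℂ, (starRingEnd ℂ) α * α = (((1+z)/2 : ℝ) : ℂ) ∧
      (starRingEnd ℂ) β * β = (((1-z)/2 : ℝ) : ℂ) ∧
      (starRingEnd ℂ) α * β = ((x:ℂ) + (y:ℂ)*Complex.I)/2 := by
  have hz1 : z ≤ 1 := by nlinarith [sq_nonneg x, sq_nonneg y, sq_nonneg (z-1)]
  have hzm1 : -1 ≤ z := by nlinarith [sq_nonneg x, sq_nonneg y, sq_nonneg (z+1)]
  rcases eq_or_lt_of_le hzm1 with hz | hz
  · have hx : x = 0 := by nlinarith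
    have hy : y = 0 := by nlinarith
    refine ⟨0, 1, ?_, ?_, ?_⟩
    · rw [← hz]; norm_num
    · rw [← hz]; norm_num
    · simp [hx, hy]
  · have hpos : 0 < (1+z)/2 := by linarith
    set a : ℝ := Real.sqrt ((1+z)/2) with ha
    have ha2 : a^2 = (1+z)/2 := Real.sq_sqrt (le_of_lt hpos)
    have hapos : 0 < a := Real.sqrt_pos.mpr hpos
    have hane : (a:ℂ) ≠ 0 := by exact_mod_cast ne_of_gt hapos
    refine ⟨(a:ℂ), ((x:ℂ) + (y:ℂ)*Complex.I)/(2*(a:ℂ)), ?_, ?_, ?_⟩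
    · rw [Complex.conj_ofReal, ← Complex.ofReal_mul]
      congr 1
      nlinarith
    · set β : ℂ := ((x:ℂ) + (y:ℂ)*Complex.I)/(2*(a:ℂ)) with hβ
      have h1 : (starRingEnd ℂ) β * β = (Complex.normSq β : ℝ) := by
        rw [mul_comm]
        exact Complex.mul_conj β
      rw [h1]
      congr 1
      rw [hβ]
      have h2 : (2*(a:ℂ)) = ((2*a : ℝ) : ℂ) := by push_cast; ring
      rw [h2, map_div₀, Complex.normSq_add_mul_I, Complex.normSq_ofReal]
      rw [div_eq_iff (by positivity)]
      nlinarith [ha2]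
    · rw [Complex.conj_ofReal]
      field_simp
lemma dot_star_comm {d : ℕ} (v w : Fin d → ℂ) :
    star v ⬝ᵥ w = (starRingEnd ℂ) (star w ⬝ᵥ v) := by
  simp only [dotProduct, map_sum, _root_.map_mul, Pi.star_apply, Complex.star_def,
    Complex.conj_conj]
  exact Finset.sum_congr rfl fun i _ => by ring

lemma expand_quad {d : ℕ} (A : Matrix (Fin d) (Fin d) ℂ) (v w : Fin d → ℂ) (α β : ℂ) :
    star (α • v + β • w) ⬝ᵥ (A *ᵥ (α • v + β • w)) =
      (starRingEnd ℂ) α * α * (star v ⬝ᵥ (A *ᵥ v)) + (starRingEnd ℂ) α * β * (star v ⬝ᵥ (A *ᵥ w))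
      + (starRingEnd ℂ) β * α * (star w ⬝ᵥ (A *ᵥ v))
      + (starRingEnd ℂ) β * β * (star w ⬝ᵥ (A *ᵥ w)) := by
  simp only [star_add, star_smul, Matrix.mulVec_add, Matrix.mulVec_smul, add_dotProduct,
    dotProduct_add, smul_dotProduct, dotProduct_smul, smul_eq_mul, Complex.star_def]
  ring

lemma expand_dot {d : ℕ} (v w : Fin d → ℂ) (α β : ℂ) :
    star (α • v + β • w) ⬝ᵥ (α • v + β • w) =
      (starRingEnd ℂ) α * α * (star v ⬝ᵥ v) + (starRingEnd ℂ) α * β * (star v ⬝ᵥ w)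
      + (starRingEnd ℂ) β * α * (star w ⬝ᵥ v) + (starRingEnd ℂ) β * β * (star w ⬝ᵥ w) := by
  simp only [star_add, star_smul, add_dotProduct, dotProduct_add, smul_dotProduct,
    dotProduct_smul, smul_eq_mul, Complex.star_def]
  ring

lemma merge {d : ℕ} (H W : Matrix (Fin d) (Fin d) ℂ) (ψ₁ ψ₂ : Fin d → ℂ)
    (n1 : star ψ₁ ⬝ᵥ ψ₁ = 1) (n2 : star ψ₂ ⬝ᵥ ψ₂ = 1) (q : ℝ) (hq0 : 0 ≤ q) (hq1 : q ≤ 1) :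
    ∃ ψ : Fin d → ℂ, star ψ ⬝ᵥ ψ = 1 ∧
      (star ψ ⬝ᵥ (H *ᵥ ψ)).re ≤ q * (star ψ₁ ⬝ᵥ (H *ᵥ ψ₁)).re
        + (1-q) * (star ψ₂ ⬝ᵥ (H *ᵥ ψ₂)).re ∧
      star ψ ⬝ᵥ (W *ᵥ ψ) = (q:ℂ) * (star ψ₁ ⬝ᵥ (W *ᵥ ψ₁))
        + (1-(q:ℂ)) * (star ψ₂ ⬝ᵥ (W *ᵥ ψ₂)) := by
  classical
  set c : ℂ := star ψ₁ ⬝ᵥ ψ₂ with hc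
  set u : Fin d → ℂ := ψ₂ - c • ψ₁ with hu
  have hψ₁u : star ψ₁ ⬝ᵥ u = 0 := by
    rw [hu, dotProduct_sub, dotProduct_smul, n1, ← hc]
    simp
  by_cases hu0 : u = 0
  · -- ψ₂ = c • ψ₁ with |c| = 1 : values coincide
    have hdep : ψ₂ = c • ψ₁ := by
      have := sub_eq_zero.mp hu0
      rw [this]
    have hcc : (starRingEnd ℂ) c * c = 1 := by
      have h2 := n2
      rw [hdep] at h2
      rw [star_smul, smul_dotProduct, dotProduct_smul, n1] at h2
      simpa [Complex.star_def] using h2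
    have hval : ∀ A : Matrix (Fin d) (Fin d) ℂ,
        star ψ₂ ⬝ᵥ (A *ᵥ ψ₂) = star ψ₁ ⬝ᵥ (A *ᵥ ψ₁) := by
      intro A
      rw [hdep, star_smul, smul_dotProduct, Matrix.mulVec_smul, dotProduct_smul]
      simp only [smul_eq_mul, Complex.star_def]
      linear_combination (star ψ₁ ⬝ᵥ (A *ᵥ ψ₁)) * hcc
    refine ⟨ψ₁, n1, ?_, ?_⟩
    · rw [hval H]; ring_nf; exact le_refl _
    · rw [hval W]; ring
  · -- orthonormal frame
    have hnn : star u ⬝ᵥ u = ((∑ i, Complex.normSq (u i) : ℝ) : ℂ) := by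
      rw [Complex.ofReal_sum]
      simp only [dotProduct, Pi.star_apply, Complex.star_def]
      exact Finset.sum_congr rfl fun i _ => by rw [mul_comm]; exact (Complex.mul_conj _)
    have hsumpos : 0 < ∑ i, Complex.normSq (u i) := by
      have hnonneg : (0:ℝ) ≤ ∑ i, Complex.normSq (u i) :=
        Finset.sum_nonneg fun i _ => Complex.normSq_nonneg _
      rcases hnonneg.lt_or_eq with hlt | heq
      · exact hlt
      · exfalso
        apply hu0
        funext i
        exact Complex.normSq_eq_zero.mp
          ((Finset.sum_eq_zero_iff_of_nonneg (fun i _ => Complex.normSq_nonneg (u i))).mp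
            heq.symm i (Finset.mem_univ i))
    set s : ℝ := Real.sqrt (∑ i, Complex.normSq (u i)) with hs
    have hspos : 0 < s := Real.sqrt_pos.mpr hsumpos
    have hs2 : s^2 = ∑ i, Complex.normSq (u i) := Real.sq_sqrt (le_of_lt hsumpos)
    have hsne : ((s:ℝ):ℂ) ≠ 0 := by exact_mod_cast ne_of_gt hspos
    set e2 : Fin d → ℂ := ((s:ℝ):ℂ)⁻¹ • u with he2
    have o12 : star ψ₁ ⬝ᵥ e2 = 0 := by
      rw [he2, dotProduct_smul, hψ₁u]
      simp
    have o21 : star e2 ⬝ᵥ ψ₁ = 0 := by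
      rw [dot_star_comm, o12, map_zero]
    have o22 : star e2 ⬝ᵥ e2 = 1 := by
      rw [he2, star_smul, smul_dotProduct, dotProduct_smul, hnn]
      simp only [smul_eq_mul, Complex.star_def, map_inv₀, Complex.conj_ofReal]
      rw [← hs2]
      push_cast
      field_simp
    have hψ₂e : ψ₂ = c • ψ₁ + ((s:ℝ):ℂ) • e2 := by
      rw [he2, smul_smul, mul_inv_cancel₀ hsne, one_smul, hu]
      abel
    -- real coordinates of c
    set cr : ℝ := c.re with hcr
    set ci : ℝ := c.im with hci
    have hcrep : c = (cr:ℂ) + (ci:ℂ)*Complex.I := by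
      rw [hcr, hci, Complex.re_add_im]
    have hconjc : (starRingEnd ℂ) c = (cr:ℂ) - (ci:ℂ)*Complex.I := by
      rw [hcrep]
      simp only [map_add, _root_.map_mul, Complex.conj_ofReal, Complex.conj_I]
      ring
    -- normalization : cr^2+ci^2+s^2 = 1
    have hn2' : (starRingEnd ℂ) c * c + ((s:ℝ):ℂ) * ((s:ℝ):ℂ) = 1 := by
      have h2 := n2
      rw [hψ₂e] at h2
      rw [expand_dot] at h2
      rw [n1, o12, o21, o22] at h2
      simp only [Complex.conj_ofReal, mul_zero, mul_one, add_zero, zero_add] at h2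
      linear_combination h2
    have hreal : cr^2 + ci^2 + s^2 = 1 := by
      have : ((cr^2 + ci^2 + s^2 : ℝ) : ℂ) = 1 := by
        rw [← hn2']
        rw [hconjc, hcrep]
        push_cast
        linear_combination ((ci:ℂ)^2) * Complex.I_sq
      exact_mod_cast this -- MARK
    -- ψ₂ bloch point
    have hval2 : ∀ A : Matrix (Fin d) (Fin d) ℂ,
        star ψ₂ ⬝ᵥ (A *ᵥ ψ₂) = fbl (star ψ₁ ⬝ᵥ (A *ᵥ ψ₁)) (star ψ₁ ⬝ᵥ (A *ᵥ e2))
          (star e2 ⬝ᵥ (A *ᵥ ψ₁)) (star e2 ⬝ᵥ (A *ᵥ e2))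
          (2*s*cr) (-(2*s*ci)) (cr^2 + ci^2 - s^2) := by
      intro A
      rw [hψ₂e, expand_quad, fbl]
      rw [hconjc, hcrep]
      push_cast
      have hrealC : ((cr:ℂ))^2 + ((ci:ℂ))^2 + ((s:ℝ):ℂ)^2 = 1 := by
        exact_mod_cast congrArg (Complex.ofReal) hreal
      simp only [Complex.conj_ofReal]
      linear_combination (-(ci:ℂ)^2 * (star ψ₁ ⬝ᵥ (A *ᵥ ψ₁))) * Complex.I_sq
        + (((star ψ₁ ⬝ᵥ (A *ᵥ ψ₁)) + (star e2 ⬝ᵥ (A *ᵥ e2)))/2) * hrealC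
    have fbl001 : ∀ P Q R S : ℂ, fbl P Q R S 0 0 1 = P := by
      intro P Q R S
      simp [fbl]
    obtain ⟨x, y, z, hxyz, hHre, hWeq⟩ := plane_find
      (star ψ₁ ⬝ᵥ (H *ᵥ ψ₁)) (star ψ₁ ⬝ᵥ (H *ᵥ e2)) (star e2 ⬝ᵥ (H *ᵥ ψ₁)) (star e2 ⬝ᵥ (H *ᵥ e2))
      (star ψ₁ ⬝ᵥ (W *ᵥ ψ₁)) (star ψ₁ ⬝ᵥ (W *ᵥ e2)) (star e2 ⬝ᵥ (W *ᵥ ψ₁)) (star e2 ⬝ᵥ (W *ᵥ e2))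
      (2*s*cr) (-(2*s*ci)) (cr^2 + ci^2 - s^2)
      (by nlinarith [hreal]) q hq0 hq1
    obtain ⟨α, β, hα, hβ, hαβ⟩ := bloch_exists x y z hxyz
    have hβα : (starRingEnd ℂ) β * α = ((x:ℂ) - (y:ℂ)*Complex.I)/2 := by
      have h3 : (starRingEnd ℂ) β * α = (starRingEnd ℂ) ((starRingEnd ℂ) α * β) := by
        rw [_root_.map_mul, Complex.conj_conj]
        ring
      rw [h3, hαβ]
      simp only [map_div₀, map_add, _root_.map_mul, Complex.conj_ofReal, Complex.conj_I,
        map_ofNat]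
      push_cast
      ring
    have hv : ∀ A : Matrix (Fin d) (Fin d) ℂ,
        star (α • ψ₁ + β • e2) ⬝ᵥ (A *ᵥ (α • ψ₁ + β • e2))
          = fbl (star ψ₁ ⬝ᵥ (A *ᵥ ψ₁)) (star ψ₁ ⬝ᵥ (A *ᵥ e2))
            (star e2 ⬝ᵥ (A *ᵥ ψ₁)) (star e2 ⬝ᵥ (A *ᵥ e2)) x y z := by
      intro A
      rw [expand_quad, hα, hβ, hαβ, hβα, fbl]
      push_cast
      ring
    refine ⟨α • ψ₁ + β • e2, ?_, ?_, ?_⟩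
    · rw [expand_dot, n1, o12, o21, o22, hα, hβ]
      push_cast
      ring
    · rw [hv H]
      rw [fbl001, ← hval2 H] at hHre
      exact hHre
    · rw [hv W, hWeq]
      rw [fbl001, ← hval2 W]

lemma mergeN {d : ℕ} (H W : Matrix (Fin d) (Fin d) ℂ) (v : Fin d → (Fin d → ℂ))
    (t : Finset (Fin d)) :
    ∀ p : Fin d → ℝ, (∀ i ∈ t, 0 ≤ p i) → (∑ i ∈ t, p i = 1) →
      (∀ i ∈ t, p i ≠ 0 → star (v i) ⬝ᵥ (v i) = 1) →
      ∃ ψ : Fin d → ℂ, star ψ ⬝ᵥ ψ = 1 ∧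
        (star ψ ⬝ᵥ (H *ᵥ ψ)).re ≤ ∑ i ∈ t, p i * (star (v i) ⬝ᵥ (H *ᵥ v i)).re ∧
        star ψ ⬝ᵥ (W *ᵥ ψ) = ∑ i ∈ t, (p i : ℂ) * (star (v i) ⬝ᵥ (W *ᵥ v i)) := by
  classical
  induction t using Finset.induction_on with
  | empty =>
    intro p _ hsum _
    simp at hsum
  | insert a t' ha ih =>
    intro p hpos hsum hunit
    rw [Finset.sum_insert ha] at hsum
    rcases eq_or_ne (p a) 0 with hpa | hpa
    · obtain ⟨ψ, hψu, hψH, hψW⟩ := ih p (fun i hi => hpos i (Finset.mem_insert_of_mem hi))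
        (by rw [hpa] at hsum; linarith)
        (fun i hi => hunit i (Finset.mem_insert_of_mem hi))
      refine ⟨ψ, hψu, ?_, ?_⟩
      · rw [Finset.sum_insert ha, hpa]
        simpa using hψH
      · rw [Finset.sum_insert ha, hpa]
        simpa using hψW
    · set S : ℝ := ∑ i ∈ t', p i with hS
      have hSnn : 0 ≤ S := Finset.sum_nonneg fun i hi => hpos i (Finset.mem_insert_of_mem hi)
      rcases eq_or_ne S 0 with hS0 | hS0
      · -- all inner weights vanish, p a = 1
        have hpa1 : p a = 1 := by rw [hS0] at hsum; linarith
        have hzero : ∀ i ∈ t', p i = 0 :=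
          (Finset.sum_eq_zero_iff_of_nonneg
            (fun i hi => hpos i (Finset.mem_insert_of_mem hi))).mp (hS.symm.trans hS0 ▸ hS0)
        refine ⟨v a, hunit a (Finset.mem_insert_self a t') hpa, ?_, ?_⟩
        · rw [Finset.sum_insert ha, hpa1,
            Finset.sum_eq_zero (fun i hi => by rw [hzero i hi]; ring)]
          simp
        · rw [Finset.sum_insert ha, hpa1,
            Finset.sum_eq_zero (fun i hi => by rw [hzero i hi]; norm_num)]
          simp
      · have hSpos : 0 < S := lt_of_le_of_ne hSnn (Ne.symm hS0)
        obtain ⟨ψt, hψtu, hψtH, hψtW⟩ := ih (fun i => p i / S)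
          (fun i hi => div_nonneg (hpos i (Finset.mem_insert_of_mem hi)) hSnn)
          (by rw [← Finset.sum_div]; field_simp; exact hS.symm)
          (fun i hi hne => hunit i (Finset.mem_insert_of_mem hi)
            (fun h0 => hne (by simp [h0])))
        have hpa1 : p a ≤ 1 := by linarith
        obtain ⟨ψ, hψu, hψH, hψW⟩ := merge H W (v a) ψt
          (hunit a (Finset.mem_insert_self a t') hpa) hψtu (p a)
          (hpos a (Finset.mem_insert_self a t')) hpa1
        have h1pa : 1 - p a = S := by linarith
        refine ⟨ψ, hψu, ?_, ?_⟩
        · rw [Finset.sum_insert ha]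
          refine le_trans hψH ?_
          have : (1 - p a) * (star ψt ⬝ᵥ (H *ᵥ ψt)).re
              ≤ ∑ i ∈ t', p i * (star (v i) ⬝ᵥ (H *ᵥ v i)).re := by
            rw [h1pa]
            calc S * (star ψt ⬝ᵥ (H *ᵥ ψt)).re
                ≤ S * ∑ i ∈ t', (p i / S) * (star (v i) ⬝ᵥ (H *ᵥ v i)).re :=
                  mul_le_mul_of_nonneg_left hψtH hSnn
              _ = ∑ i ∈ t', p i * (star (v i) ⬝ᵥ (H *ᵥ v i)).re := by
                  rw [Finset.mul_sum]
                  exact Finset.sum_congr rfl fun i hi => by field_simp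
          linarith
        · rw [Finset.sum_insert ha, hψW, hψtW]
          have hSC : ((S:ℝ):ℂ) ≠ 0 := by exact_mod_cast hS0
          have h1paC : (1:ℂ) - (p a : ℝ) = ((S:ℝ):ℂ) := by
            rw [← h1pa]; push_cast; ring
          rw [h1paC, Finset.mul_sum]
          congr 1
          exact Finset.sum_congr rfl fun i hi => by
            push_cast
            field_simp

lemma trace_vecMulVec_mul {d : ℕ} (ψ : Fin d → ℂ) (A : Matrix (Fin d) (Fin d) ℂ) :
    (Matrix.vecMulVec ψ (star ψ) * A).trace = star ψ ⬝ᵥ (A *ᵥ ψ) := by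
  simp only [Matrix.trace, Matrix.diag_apply, Matrix.mul_apply, Matrix.vecMulVec_apply,
    dotProduct, Matrix.mulVec, Pi.star_apply, Finset.mul_sum, Finset.sum_mul]
  rw [Finset.sum_comm]
  apply Finset.sum_congr rfl; intro j _
  apply Finset.sum_congr rfl; intro i _
  ring

lemma posSemidef_vecMulVec_star {d : ℕ} (ψ : Fin d → ℂ) :
    (Matrix.vecMulVec ψ (star ψ)).PosSemidef := by
  rw [Matrix.posSemidef_iff_dotProduct_mulVec]
  constructor
  · ext i j
    simp [Matrix.conjTranspose_apply, Matrix.vecMulVec_apply, mul_comm]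
  · intro x
    have : star x ⬝ᵥ (Matrix.vecMulVec ψ (star ψ) *ᵥ x) = star (star ψ ⬝ᵥ x) * (star ψ ⬝ᵥ x) := by
      simp only [dotProduct, Matrix.mulVec, Matrix.vecMulVec_apply, Pi.star_apply,
        Finset.mul_sum, Finset.sum_mul, star_sum, star_mul']
      rw [Finset.sum_comm]
      apply Finset.sum_congr rfl; intro j _
      apply Finset.sum_congr rfl; intro i _
      simp [mul_comm, mul_left_comm, mul_assoc]
    rw [this]
    exact star_mul_self_nonneg _

lemma trace_vecMulVec {d : ℕ} (ψ : Fin d → ℂ) :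
    (Matrix.vecMulVec ψ (star ψ)).trace = star ψ ⬝ᵥ ψ := by
  simp [Matrix.trace, Matrix.diag, Matrix.vecMulVec_apply, dotProduct, mul_comm]

lemma spectral_expand {d : ℕ} {ρ : Matrix (Fin d) (Fin d) ℂ} (hρ : ρ.IsHermitian)
    (A : Matrix (Fin d) (Fin d) ℂ) :
    (ρ * A).trace = ∑ i, (hρ.eigenvalues i : ℂ) *
      (star (fun k => (hρ.eigenvectorUnitary : Matrix (Fin d) (Fin d) ℂ) k i) ⬝ᵥ
        (A *ᵥ (fun k => (hρ.eigenvectorUnitary : Matrix (Fin d) (Fin d) ℂ) k i))) := by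
  set U : Matrix (Fin d) (Fin d) ℂ := (hρ.eigenvectorUnitary : Matrix (Fin d) (Fin d) ℂ) with hU
  have h1 : (ρ * A).trace = (diagonal (RCLike.ofReal ∘ hρ.eigenvalues) * (star U * A * U)).trace := by
    conv_lhs => rw [hρ.spectral_theorem, Unitary.conjStarAlgAut_apply, ← hU]
    simp only [Matrix.mul_assoc]
    rw [Matrix.trace_mul_comm]
    simp only [Matrix.mul_assoc]
  rw [h1]
  have h2 : ∀ M : Matrix (Fin d) (Fin d) ℂ,
      (diagonal (RCLike.ofReal ∘ hρ.eigenvalues) * M).trace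
        = ∑ i, (hρ.eigenvalues i : ℂ) * M i i := by
    intro M
    simp [Matrix.trace, Matrix.diag, Matrix.diagonal_mul]
  rw [h2]
  apply Finset.sum_congr rfl; intro i _
  congr 1
  show (star U * A * U) i i = _
  simp only [Matrix.mul_apply, Matrix.star_apply, dotProduct, Matrix.mulVec, Pi.star_apply,
    Finset.sum_mul, Finset.mul_sum]
  rw [Finset.sum_comm]
  apply Finset.sum_congr rfl; intro j _
  apply Finset.sum_congr rfl; intro k _
  ring

lemma unit_col {d : ℕ} {ρ : Matrix (Fin d) (Fin d) ℂ} (hρ : ρ.IsHermitian) (i : Fin d) :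
    star (fun k => (hρ.eigenvectorUnitary : Matrix (Fin d) (Fin d) ℂ) k i) ⬝ᵥ
      (fun k => (hρ.eigenvectorUnitary : Matrix (Fin d) (Fin d) ℂ) k i) = 1 := by
  have h := (Matrix.mem_unitaryGroup_iff').mp (hρ.eigenvectorUnitary).2
  have := congrFun (congrFun h i) i
  simpa [Matrix.mul_apply, Matrix.conjTranspose_apply, dotProduct, Matrix.one_apply] using this

/-- **Energy-constrained discrimination: pure states suffice (finite dimensions).**
For a `d × d` grounded Hamiltonian `H` (positive semidefinite with `0` an eigenvalue),
energy bound `E > 0`, and an arbitrary matrix `W`, the infimum of `|Tr (ρ W)|` over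
density matrices `ρ` with `Tr (ρ H) ≤ E` equals the infimum of `|⟨ψ, W ψ⟩|` over unit
vectors `ψ` with `⟨ψ, H ψ⟩ ≤ E`. -/
theorem energy_constrained_inf_mixed_eq_inf_pure
    (d : ℕ) (hd : 3 ≤ d)
    (H : Matrix (Fin d) (Fin d) ℂ) (hH : H.PosSemidef)
    (hground : ∃ v : Fin d → ℂ, v ≠ 0 ∧ H *ᵥ v = 0)
    (E : ℝ) (hE : 0 < E)
    (W : Matrix (Fin d) (Fin d) ℂ) :
    sInf {x : ℝ | ∃ ρ : Matrix (Fin d) (Fin d) ℂ, ρ.PosSemidef ∧ (ρ.trace = 1) ∧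
        ((ρ * H).trace).re ≤ E ∧ x = ‖(ρ * W).trace‖}
      = sInf {x : ℝ | ∃ ψ : Fin d → ℂ, (star ψ ⬝ᵥ ψ = 1) ∧
        ((star ψ ⬝ᵥ (H *ᵥ ψ)).re ≤ E) ∧ x = ‖star ψ ⬝ᵥ (W *ᵥ ψ)‖} := by
  have hsets : {x : ℝ | ∃ ρ : Matrix (Fin d) (Fin d) ℂ, ρ.PosSemidef ∧ (ρ.trace = 1) ∧
        ((ρ * H).trace).re ≤ E ∧ x = ‖(ρ * W).trace‖}
      = {x : ℝ | ∃ ψ : Fin d → ℂ, (star ψ ⬝ᵥ ψ = 1) ∧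
        ((star ψ ⬝ᵥ (H *ᵥ ψ)).re ≤ E) ∧ x = ‖star ψ ⬝ᵥ (W *ᵥ ψ)‖} := by
    ext x
    simp only [Set.mem_setOf_eq]
    constructor
    · rintro ⟨ρ, hPSD, htr, hen, hx⟩
      have hherm : ρ.IsHermitian := hPSD.1
      set p : Fin d → ℝ := hherm.eigenvalues with hp
      set v : Fin d → (Fin d → ℂ) :=
        fun i => (fun k => (hherm.eigenvectorUnitary : Matrix (Fin d) (Fin d) ℂ) k i) with hv
      have hpnn : ∀ i, 0 ≤ p i := hPSD.eigenvalues_nonneg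
      have hpsum : ∑ i, p i = 1 := by
        have h1 := spectral_expand hherm 1
        rw [Matrix.mul_one, htr] at h1
        simp only [Matrix.one_mulVec] at h1
        have h2 : (1:ℂ) = ∑ i, (p i : ℂ) := by
          rw [h1]
          exact Finset.sum_congr rfl fun i _ => by rw [unit_col hherm i, mul_one]
        have h3 : ((∑ i, p i : ℝ) : ℂ) = 1 := by push_cast; rw [← h2]
        exact_mod_cast h3
      have hHre : ((ρ * H).trace).re = ∑ i, p i * (star (v i) ⬝ᵥ (H *ᵥ v i)).re := by
        rw [spectral_expand hherm H, Complex.re_sum]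
        exact Finset.sum_congr rfl fun i _ => by
          rw [Complex.re_ofReal_mul]
      have hWeq : (ρ * W).trace = ∑ i, (p i : ℂ) * (star (v i) ⬝ᵥ (W *ᵥ v i)) :=
        spectral_expand hherm W
      obtain ⟨ψ, hψu, hψH, hψW⟩ := mergeN H W v Finset.univ p (fun i _ => hpnn i) hpsum
        (fun i _ _ => unit_col hherm i)
      refine ⟨ψ, hψu, ?_, ?_⟩
      · calc (star ψ ⬝ᵥ (H *ᵥ ψ)).re ≤ ∑ i, p i * (star (v i) ⬝ᵥ (H *ᵥ v i)).re := hψH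
          _ = ((ρ * H).trace).re := hHre.symm
          _ ≤ E := hen
      · rw [hx, hψW, ← hWeq]
    · rintro ⟨ψ, hψu, hen, hx⟩
      refine ⟨Matrix.vecMulVec ψ (star ψ), posSemidef_vecMulVec_star ψ, ?_, ?_, ?_⟩
      · rw [_root_.trace_vecMulVec, hψu]
      · rw [trace_vecMulVec_mul]
        exact hen
      · rw [trace_vecMulVec_mul]
        exact hx
  rw [hsets]
end

section
/- Let ℋ be a complex Hilbert space, let H and H' be bounded self-adjoint operators on ℋ, and let H₀ be a bounded positive self-adjoint operator on ℋ. Suppose there are constants α, β, γ, δ > 0 such that (i) ‖(H − H')ψ‖ ≤ α‖Hψ‖ + β‖ψ‖ for all ψ ∈ ℋ, and (ii) ⟨ψ, |H| ψ⟩ ≤ γ⟨ψ, H₀ψ⟩ + δ‖ψ‖² for all ψ ∈ ℋ, where |H| is the absolute value of H. Then for every t ≥ 0 and every unit vector ψ ∈ ℋ, ‖(exp(−itH) − exp(−itH'))ψ‖ ≤ 2·√( (γ⟨ψ, H₀ψ⟩ + δ)·α·t ) + β·t. -/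
open scoped InnerProductSpace

open NormedSpace Complex

set_option synthInstance.maxHeartbeats 1000000
set_option maxHeartbeats 4000000

section QSLAux

variable {ℋ : Type*} [NormedAddCommGroup ℋ] [InnerProductSpace ℂ ℋ] [CompleteSpace ℋ]

private lemma qsl_skew (H : ℋ →L[ℂ] ℋ) (hH : IsSelfAdjoint H) (t : ℝ) :
    t • ((-I) • H) ∈ skewAdjoint (ℋ →L[ℂ] ℋ) := by
  rw [skewAdjoint.mem_iff, star_smul, star_smul, hH.star_eq, star_def, map_neg, conj_I,
    star_trivial]
  simp only [neg_smul, smul_neg, neg_neg]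

private lemma qsl_unitary (H : ℋ →L[ℂ] ℋ) (hH : IsSelfAdjoint H) (t : ℝ) :
    NormedSpace.exp (t • ((-I) • H)) ∈ unitary (ℋ →L[ℂ] ℋ) := by
  let +nondep : NormedAlgebra ℚ (ℋ →L[ℂ] ℋ) := .restrictScalars ℚ ℂ _
  exact exp_mem_unitary_of_mem_skewAdjoint (qsl_skew H hH t)

private lemma qsl_norm_exp (H : ℋ →L[ℂ] ℋ) (hH : IsSelfAdjoint H) (t : ℝ) (x : ℋ) :
    ‖NormedSpace.exp (t • ((-I) • H)) x‖ = ‖x‖ :=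
  ContinuousLinearMap.norm_map_of_mem_unitary (qsl_unitary H hH t) x

private lemma qsl_comm (H : ℋ →L[ℂ] ℋ) (s : ℝ) :
    H * NormedSpace.exp (s • ((-I) • H)) = NormedSpace.exp (s • ((-I) • H)) * H :=
  (((Commute.refl H).smul_right (-I)).smul_right s).exp_right

private lemma qsl_duhamel (H H' : ℋ →L[ℂ] ℋ) (hH' : IsSelfAdjoint H')
    (t : ℝ) (ht : 0 ≤ t) (φ : ℋ) {C : ℝ}
    (hC : ∀ s : ℝ, ‖(H - H') (NormedSpace.exp (s • ((-I) • H)) φ)‖ ≤ C) :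
    ‖(NormedSpace.exp (t • ((-I) • H)) - NormedSpace.exp (t • ((-I) • H'))) φ‖ ≤ C * t := by
  set M : ℋ →L[ℂ] ℋ := (-I) • H with hM
  set M' : ℋ →L[ℂ] ℋ := (-I) • H' with hM'
  set Φ : (ℋ →L[ℂ] ℋ) →L[ℝ] ℋ :=
    ((ContinuousLinearMap.apply ℂ ℋ φ).restrictScalars ℝ) with hΦ
  have hΦ_apply : ∀ A : ℋ →L[ℂ] ℋ, Φ A = A φ := fun A => rfl
  set g : ℝ → ℋ := fun s => Φ (NormedSpace.exp ((t - s) • M') * NormedSpace.exp (s • M)) with hg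
  set d : ℝ → ℋ := fun s => Φ (NormedSpace.exp ((t - s) • M') * ((M - M') * NormedSpace.exp (s • M))) with hd
  have hcommM : ∀ s : ℝ, M * NormedSpace.exp (s • M) = NormedSpace.exp (s • M) * M := fun s =>
    (((Commute.refl M).smul_right s)).exp_right
  have hderiv : ∀ s : ℝ, HasDerivAt g (d s) s := by
    intro s
    have hA : HasDerivAt (fun u : ℝ => NormedSpace.exp (u • M)) (NormedSpace.exp (s • M) * M) s :=
      hasDerivAt_exp_smul_const M s
    have hsub : HasDerivAt (fun u : ℝ => t - u) (-1 : ℝ) s := by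
      simpa using (hasDerivAt_id s).const_sub t
    have hB : HasDerivAt (fun u : ℝ => NormedSpace.exp ((t - u) • M'))
        ((-1 : ℝ) • (NormedSpace.exp ((t - s) • M') * M')) s :=
      (hasDerivAt_exp_smul_const M' (t - s)).scomp s hsub
    have hF := hB.mul hA
    have hFd := (Φ.hasFDerivAt.comp_hasDerivAt s hF)
    convert hFd using 1
    · rfl
    simp only [hd, hΦ_apply]
    congr 1
    rw [← hcommM s, neg_one_smul]
    noncomm_ring
  have hcont : Continuous d := by
    let +nondep : NormedAlgebra ℚ (ℋ →L[ℂ] ℋ) := .restrictScalars ℚ ℂ _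
    apply Φ.continuous.comp
    apply Continuous.mul
    · exact exp_continuous.comp ((continuous_const.sub continuous_id).smul continuous_const)
    · exact continuous_const.mul (exp_continuous.comp (continuous_id.smul continuous_const))
  have hC0 : 0 ≤ C := le_trans (norm_nonneg _) (hC 0)
  have hnorm : ∀ s : ℝ, ‖d s‖ ≤ C := by
    intro s
    have h1 : d s = NormedSpace.exp ((t - s) • M') ((M - M') (NormedSpace.exp (s • M) φ)) := by
      simp only [hd, hΦ_apply, ContinuousLinearMap.mul_apply]
    rw [h1, qsl_norm_exp H' hH' (t - s)]
    have h2 : (M - M') (NormedSpace.exp (s • M) φ) = (-I) • ((H - H') (NormedSpace.exp (s • M) φ)) := by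
      rw [hM, hM', ← smul_sub]
      simp [ContinuousLinearMap.smul_apply]
    rw [h2, norm_smul]
    simpa using hC s
  have hint : IntervalIntegrable d MeasureTheory.volume 0 t :=
    hcont.intervalIntegrable 0 t
  have hftc := intervalIntegral.integral_eq_sub_of_hasDerivAt (fun s _ => hderiv s) hint
  have hgt : g t = NormedSpace.exp (t • M) φ := by
    simp only [hg, hΦ_apply, sub_self, zero_smul, NormedSpace.exp_zero, one_mul,
      ContinuousLinearMap.one_apply, ContinuousLinearMap.mul_apply]
  have hg0 : g 0 = NormedSpace.exp (t • M') φ := by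
    simp only [hg, hΦ_apply, sub_zero, zero_smul, NormedSpace.exp_zero, mul_one,
      ContinuousLinearMap.one_apply, ContinuousLinearMap.mul_apply]
  have hmain : ‖g t - g 0‖ ≤ C * |t - 0| := by
    rw [← hftc]
    exact intervalIntegral.norm_integral_le_of_norm_le_const (fun x _ => hnorm x)
  rw [hgt, hg0] at hmain
  calc ‖(NormedSpace.exp (t • M) - NormedSpace.exp (t • M')) φ‖ = ‖NormedSpace.exp (t • M) φ - NormedSpace.exp (t • M') φ‖ := by
        rw [ContinuousLinearMap.sub_apply]
    _ ≤ C * |t - 0| := hmain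
    _ = C * t := by rw [sub_zero, _root_.abs_of_nonneg ht]

private lemma qsl_inner_mono {A B : ℋ →L[ℂ] ℋ} (h : A ≤ B) (ψ : ℋ) :
    (⟪ψ, A ψ⟫_ℂ).re ≤ (⟪ψ, B ψ⟫_ℂ).re := by
  rw [ContinuousLinearMap.le_def] at h
  have h2 := h.re_inner_nonneg_right ψ
  rw [ContinuousLinearMap.sub_apply, inner_sub_right] at h2
  change (0:ℝ) ≤ (⟪ψ, B ψ⟫_ℂ - ⟪ψ, A ψ⟫_ℂ).re at h2
  rw [Complex.sub_re] at h2
  linarith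

private lemma qsl_norm_sq_inner (T : ℋ →L[ℂ] ℋ) (hT : IsSelfAdjoint T) (ψ : ℋ) :
    ‖T ψ‖ ^ 2 = (⟪ψ, (T * T) ψ⟫_ℂ).re := by
  rw [ContinuousLinearMap.mul_apply, ← ContinuousLinearMap.adjoint_inner_left T,
    hT.adjoint_eq]
  exact (inner_self_eq_norm_sq (𝕜 := ℂ) (T ψ)).symm

private lemma qsl_re_inner_real_smul (r : ℝ) (A : ℋ →L[ℂ] ℋ) (ψ : ℋ) :
    (⟪ψ, (r • A) ψ⟫_ℂ).re = r * (⟪ψ, A ψ⟫_ℂ).re := by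
  rw [ContinuousLinearMap.smul_apply]
  have h : r • (A ψ) = (r : ℂ) • (A ψ) := by
    simp [Complex.coe_smul]
  rw [h, inner_smul_right]
  simp

end QSLAux

/-- **Quantum speed limit for two different unitary groups (bounded case).**
If `‖(H − H')ψ‖ ≤ α‖Hψ‖ + β‖ψ‖` and `⟨ψ, |H| ψ⟩ ≤ γ⟨ψ, H₀ψ⟩ + δ‖ψ‖²`, then for unit
vectors `ψ` and `t ≥ 0`,
`‖(e^{−itH} − e^{−itH'})ψ‖ ≤ 2√((γ⟨ψ,H₀ψ⟩ + δ)·α·t) + β·t`. -/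
theorem quantum_speed_limit_two_unitary_groups
    {ℋ : Type*} [NormedAddCommGroup ℋ] [InnerProductSpace ℂ ℋ] [CompleteSpace ℋ]
    (H H' H₀ : ℋ →L[ℂ] ℋ)
    (hH : IsSelfAdjoint H) (hH' : IsSelfAdjoint H')
    (hH₀ : ContinuousLinearMap.IsPositive H₀)
    (α β γ δ : ℝ) (hα : 0 < α) (hβ : 0 < β) (hγ : 0 < γ) (hδ : 0 < δ)
    (hrel : ∀ ψ : ℋ, ‖(H - H') ψ‖ ≤ α * ‖H ψ‖ + β * ‖ψ‖)
    (habs : ∀ ψ : ℋ, (⟪ψ, (cfc (fun t : ℝ => |t|) H) ψ⟫_ℂ).re ≤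
      γ * (⟪ψ, H₀ ψ⟫_ℂ).re + δ * ‖ψ‖ ^ 2) :
    ∀ (t : ℝ), 0 ≤ t → ∀ ψ : ℋ, ‖ψ‖ = 1 →
      ‖(NormedSpace.exp ((-(t : ℂ) * Complex.I) • H)
          - NormedSpace.exp ((-(t : ℂ) * Complex.I) • H')) ψ‖ ≤
        2 * Real.sqrt ((γ * (⟪ψ, H₀ ψ⟫_ℂ).re + δ) * α * t) + β * t := by
  intro t ht ψ hψ
  rcases eq_or_lt_of_le ht with rfl | htpos
  · simp [NormedSpace.exp_zero]
  -- convert exp to real-parameter form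
  have hform : ∀ (K : ℋ →L[ℂ] ℋ), ((-(t:ℂ) * I) • K) = t • ((-I) • K) := by
    intro K
    rw [← smul_assoc, Complex.real_smul]
    ring_nf
  rw [hform H, hform H']
  set Creal : ℝ := γ * (⟪ψ, H₀ ψ⟫_ℂ).re + δ with hCreal
  have hC0 : 0 < Creal := by
    have h0 := hH₀.re_inner_nonneg_right ψ
    have : (0:ℝ) ≤ (⟪ψ, H₀ ψ⟫_ℂ).re := h0
    nlinarith
  have hat : 0 < α * t := mul_pos hα htpos
  set Λ : ℝ := 2 / (α * t) with hΛ
  have hΛpos : 0 < Λ := by positivity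
  set f : ℝ → ℝ := fun x => Λ / max Λ |x| with hfdef
  set gf : ℝ → ℝ := fun x => 1 - f x with hgdef
  have hmaxpos : ∀ x : ℝ, 0 < max Λ |x| := fun x => lt_of_lt_of_le hΛpos (le_max_left _ _)
  have hfcont : Continuous f := continuous_const.div (continuous_const.max continuous_abs)
      (fun x => (hmaxpos x).ne')
  have hgcont : Continuous gf := continuous_const.sub hfcont
  have hf0 : ∀ x, 0 ≤ f x := fun x => div_nonneg hΛpos.le (hmaxpos x).le
  have hf1 : ∀ x, f x ≤ 1 := fun x => div_le_one_of_le₀ (le_max_left _ _) (hmaxpos x).le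
  -- the key pointwise inequality
  have hkey : ∀ x : ℝ, (x * f x) * (x * f x) + (Λ * gf x) * (Λ * gf x) ≤ Λ * |x| := by
    intro x
    have hfeq : ∀ y : ℝ, f y = Λ / max Λ |y| := fun _ => rfl
    have hgeq : ∀ y : ℝ, gf y = 1 - f y := fun _ => rfl
    rcases le_or_gt |x| Λ with hx | hx
    · have hm : max Λ |x| = Λ := max_eq_left hx
      have hfx : f x = 1 := by rw [hfeq x, hm]; exact div_self hΛpos.ne'
      have hgx : gf x = 0 := by rw [hgeq x, hfx]; ring
      rw [hfx, hgx]
      have h1 : x * 1 * (x * 1) = |x| * |x| := by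
        rw [mul_one]
        exact (abs_mul_abs_self x).symm
      rw [h1]
      nlinarith [abs_nonneg x, mul_nonneg (abs_nonneg x) (sub_nonneg.2 hx)]
    · have hm : max Λ |x| = |x| := max_eq_right hx.le
      set r : ℝ := |x| with hr
      have hrpos : 0 < r := lt_trans hΛpos hx
      have hfx : f x = Λ / r := by rw [hfeq x, hm]
      have hgx : gf x = (r - Λ) / r := by
        rw [hgeq x, hfx, one_sub_div hrpos.ne']
      have hx2 : x * x = r * r := by rw [hr]; exact (abs_mul_abs_self x).symm
      have hpos1 : 0 ≤ Λ * (r - Λ) := mul_nonneg hΛpos.le (by linarith)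
      have hpos2 : 0 ≤ r * r - Λ * r + Λ * Λ := by nlinarith [sq_nonneg (r - Λ)]
      have hineq : (Λ * Λ) * (r * r) + (Λ * Λ) * ((r - Λ) * (r - Λ)) ≤ Λ * (r * (r * r)) := by
        nlinarith [mul_nonneg hpos1 hpos2]
      rw [hfx, hgx]
      have e1 : x * (Λ / r) * (x * (Λ / r)) + (Λ * ((r - Λ) / r)) * (Λ * ((r - Λ) / r))
          = ((Λ * Λ) * (r * r) + (Λ * Λ) * ((r - Λ) * (r - Λ))) / (r * r) := by
        rw [show x * (Λ / r) * (x * (Λ / r)) = (x * x) * (Λ * Λ) / (r * r) by ring, hx2]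
        field_simp
      rw [e1, div_le_iff₀ (by positivity : (0:ℝ) < r * r)]
      nlinarith [hineq]
  -- operators from functional calculus
  have hfc : ContinuousOn f (spectrum ℝ H) := hfcont.continuousOn
  have hgc : ContinuousOn gf (spectrum ℝ H) := hgcont.continuousOn
  set P : ℋ →L[ℂ] ℋ := cfc f H with hP
  set Q : ℋ →L[ℂ] ℋ := cfc gf H with hQ
  have hPQ : P + Q = 1 := by
    rw [hP, hQ, ← cfc_add H f gf hfc hgc]
    have hh : (fun x => f x + gf x) = fun _ : ℝ => (1:ℝ) := by
      funext x; rw [hgdef]; ring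
    rw [hh]
    exact cfc_one ℝ H
  have hsplit : ψ = P ψ + Q ψ := by
    rw [← ContinuousLinearMap.add_apply, hPQ, ContinuousLinearMap.one_apply]
  set a : ℝ := ‖H (P ψ)‖ with ha
  set b : ℝ := ‖Q ψ‖ with hb
  have ha0 : 0 ≤ a := norm_nonneg _
  have hb0 : 0 ≤ b := norm_nonneg _
  -- the operator T = H * P as cfc
  set T : ℋ →L[ℂ] ℋ := cfc (fun x : ℝ => x * f x) H with hT
  have hHP : H * P = T := by
    rw [hT, hP, cfc_mul (fun x : ℝ => x) f H (continuousOn_id) hfc, cfc_id' ℝ H]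
  have hTsa : IsSelfAdjoint T := cfc_predicate _ H
  have hQsa : IsSelfAdjoint Q := cfc_predicate _ H
  have haT : a = ‖T ψ‖ := by
    rw [ha, ← ContinuousLinearMap.mul_apply, hHP]
  -- quadratic bound : a^2 + Λ^2 b^2 ≤ Λ * Creal
  have hquad : a ^ 2 + (Λ * b) ^ 2 ≤ Λ * Creal := by
    have e1 : a ^ 2 = (⟪ψ, (T * T) ψ⟫_ℂ).re := by
      rw [haT]; exact qsl_norm_sq_inner T hTsa ψ
    set W : ℋ →L[ℂ] ℋ := cfc (fun x : ℝ => Λ * gf x) H with hW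
    have hWsa : IsSelfAdjoint W := cfc_predicate _ H
    have hWQ : W = Λ • Q := by
      rw [hW, hQ]; exact cfc_const_mul Λ gf H hgc
    have hWb : ‖W ψ‖ = Λ * b := by
      rw [hWQ, ContinuousLinearMap.smul_apply, norm_smul, Real.norm_eq_abs,
        _root_.abs_of_pos hΛpos, hb]
    have e2 : (Λ * b) ^ 2 = (⟪ψ, (W * W) ψ⟫_ℂ).re := by
      rw [← hWb]; exact qsl_norm_sq_inner W hWsa ψ
    have hTT : T * T = cfc (fun x : ℝ => (x * f x) * (x * f x)) H := by
      rw [hT, cfc_mul (fun x : ℝ => x * f x) (fun x : ℝ => x * f x) H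
        (continuousOn_id.mul hfc) (continuousOn_id.mul hfc)]
    have hWW : W * W = cfc (fun x : ℝ => (Λ * gf x) * (Λ * gf x)) H := by
      rw [hW, cfc_mul (fun x : ℝ => Λ * gf x) (fun x : ℝ => Λ * gf x) H
        (continuousOn_const.mul hgc) (continuousOn_const.mul hgc)]
    set S : ℋ →L[ℂ] ℋ :=
      cfc (fun x : ℝ => (x * f x) * (x * f x) + (Λ * gf x) * (Λ * gf x)) H with hS
    have hSsum : S = T * T + W * W := by
      rw [hS, hTT, hWW,
        cfc_add H (fun x : ℝ => (x * f x) * (x * f x)) (fun x : ℝ => (Λ * gf x) * (Λ * gf x))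
          ((continuousOn_id.mul hfc).mul (continuousOn_id.mul hfc))
          ((continuousOn_const.mul hgc).mul (continuousOn_const.mul hgc))]
    have hSle : S ≤ cfc (fun x : ℝ => Λ * |x|) H := by
      rw [hS]
      exact cfc_mono (fun x _ => hkey x)
        (((continuousOn_id.mul hfc).mul (continuousOn_id.mul hfc)).add
          ((continuousOn_const.mul hgc).mul (continuousOn_const.mul hgc)))
        (continuousOn_const.mul continuous_abs.continuousOn)
    have habsH : cfc (fun x : ℝ => Λ * |x|) H = Λ • cfc (fun x : ℝ => |x|) H :=
      cfc_const_mul Λ (fun x : ℝ => |x|) H continuous_abs.continuousOn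
    have step1 : (⟪ψ, S ψ⟫_ℂ).re = a ^ 2 + (Λ * b) ^ 2 := by
      rw [hSsum, ContinuousLinearMap.add_apply, inner_add_right, Complex.add_re, e1, e2]
    have step2 : (⟪ψ, S ψ⟫_ℂ).re ≤ Λ * (⟪ψ, cfc (fun x : ℝ => |x|) H ψ⟫_ℂ).re := by
      have h9 := qsl_inner_mono hSle ψ
      rw [habsH, qsl_re_inner_real_smul] at h9
      exact h9
    have step3 : (⟪ψ, cfc (fun x : ℝ => |x|) H ψ⟫_ℂ).re ≤ Creal := by
      have h8 := habs ψ
      rw [hψ] at h8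
      simpa [hCreal] using h8
    have step4 : Λ * (⟪ψ, cfc (fun x : ℝ => |x|) H ψ⟫_ℂ).re ≤ Λ * Creal :=
      mul_le_mul_of_nonneg_left step3 hΛpos.le
    have step5 := step2
    rw [step1] at step5
    linarith
  -- bound on ‖Pψ‖
  have hPnorm : ‖P ψ‖ ≤ 1 := by
    have h1 : ‖P‖ ≤ 1 := by
      rw [hP]
      exact norm_cfc_le zero_le_one (fun x _ => by
        rw [Real.norm_eq_abs, _root_.abs_of_nonneg (hf0 x)]; exact hf1 x)
    calc ‖P ψ‖ ≤ ‖P‖ * ‖ψ‖ := P.le_opNorm ψ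
      _ ≤ 1 := by rw [hψ, mul_one]; exact h1
  -- Duhamel bound for P ψ
  have hC₁ : ∀ s : ℝ, ‖(H - H') (NormedSpace.exp (s • ((-I) • H)) (P ψ))‖ ≤ α * a + β * ‖P ψ‖ := by
    intro s
    refine le_trans (hrel _) ?_
    have e1 : H (NormedSpace.exp (s • ((-I) • H)) (P ψ)) = NormedSpace.exp (s • ((-I) • H)) (H (P ψ)) := by
      rw [← ContinuousLinearMap.mul_apply, qsl_comm H s, ContinuousLinearMap.mul_apply]
    rw [e1, qsl_norm_exp H hH s, qsl_norm_exp H hH s]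
  have hd1 : ‖(NormedSpace.exp (t • ((-I) • H)) - NormedSpace.exp (t • ((-I) • H'))) (P ψ)‖
      ≤ (α * a + β * ‖P ψ‖) * t :=
    qsl_duhamel H H' hH' t ht (P ψ) hC₁
  -- trivial bound for Q ψ
  have hd2 : ‖(NormedSpace.exp (t • ((-I) • H)) - NormedSpace.exp (t • ((-I) • H'))) (Q ψ)‖ ≤ 2 * b := by
    rw [ContinuousLinearMap.sub_apply]
    calc ‖NormedSpace.exp (t • ((-I) • H)) (Q ψ) - NormedSpace.exp (t • ((-I) • H')) (Q ψ)‖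
        ≤ ‖NormedSpace.exp (t • ((-I) • H)) (Q ψ)‖ + ‖NormedSpace.exp (t • ((-I) • H')) (Q ψ)‖ := norm_sub_le _ _
      _ = b + b := by rw [qsl_norm_exp H hH t, qsl_norm_exp H' hH' t]
      _ = 2 * b := by ring
  -- put things together
  have hsum : ‖(NormedSpace.exp (t • ((-I) • H)) - NormedSpace.exp (t • ((-I) • H'))) ψ‖
      ≤ α * t * a + 2 * b + β * t := by
    calc ‖(NormedSpace.exp (t • ((-I) • H)) - NormedSpace.exp (t • ((-I) • H'))) ψ‖
        = ‖(NormedSpace.exp (t • ((-I) • H)) - NormedSpace.exp (t • ((-I) • H'))) (P ψ)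
            + (NormedSpace.exp (t • ((-I) • H)) - NormedSpace.exp (t • ((-I) • H'))) (Q ψ)‖ := by
          rw [← map_add]; rw [← hsplit]
      _ ≤ ‖(NormedSpace.exp (t • ((-I) • H)) - NormedSpace.exp (t • ((-I) • H'))) (P ψ)‖
            + ‖(NormedSpace.exp (t • ((-I) • H)) - NormedSpace.exp (t • ((-I) • H'))) (Q ψ)‖ := norm_add_le _ _
      _ ≤ (α * a + β * ‖P ψ‖) * t + 2 * b := add_le_add hd1 hd2
      _ ≤ α * t * a + 2 * b + β * t := by
          have hx1 : β * t * ‖P ψ‖ ≤ β * t * 1 :=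
            mul_le_mul_of_nonneg_left hPnorm (mul_nonneg hβ.le ht)
          nlinarith [hx1]
  -- final arithmetic
  have h4 : (α * t * a) ^ 2 + 4 * b ^ 2 ≤ 2 * ((α * t) * Creal) := by
    have hΛval : Λ * (α * t) = 2 := by
      rw [hΛ]; field_simp
    have hmul := mul_le_mul_of_nonneg_left hquad (le_of_lt (mul_pos hat hat))
    have k1 : α * t * (α * t) * ((Λ * b) ^ 2) = 4 * b ^ 2 := by
      linear_combination (b ^ 2 * (Λ * (α * t) + 2)) * hΛval
    have k2 : α * t * (α * t) * (Λ * Creal) = 2 * ((α * t) * Creal) := by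
      linear_combination (α * t * Creal) * hΛval
    nlinarith [hmul, k1, k2]
  have h5 : α * t * a + 2 * b ≤ 2 * Real.sqrt (Creal * (α * t)) := by
    have hs : (α * t * a + 2 * b) ^ 2 ≤ 4 * (Creal * (α * t)) := by
      nlinarith [h4, sq_nonneg (α * t * a - 2 * b)]
    have hnn : 0 ≤ α * t * a + 2 * b := by positivity
    have h6 : α * t * a + 2 * b ≤ Real.sqrt (4 * (Creal * (α * t))) := by
      rw [show (4:ℝ) * (Creal * (α * t)) = (2 * Real.sqrt (Creal * (α * t))) ^ 2 by
        rw [mul_pow, Real.sq_sqrt (by positivity)]; ring]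
      rw [Real.sqrt_sq (by positivity)]
      nlinarith [hs, Real.sq_sqrt (show (0:ℝ) ≤ Creal * (α * t) by positivity),
        Real.sqrt_nonneg (Creal * (α * t)), hnn]
    calc α * t * a + 2 * b ≤ Real.sqrt (4 * (Creal * (α * t))) := h6
      _ = 2 * Real.sqrt (Creal * (α * t)) := by
        rw [show (4:ℝ) = 2 ^ 2 by norm_num, Real.sqrt_mul (by positivity) _,
          Real.sqrt_sq (by norm_num)]
  have hfinal : Creal * (α * t) = (γ * (⟪ψ, H₀ ψ⟫_ℂ).re + δ) * α * t := by
    rw [hCreal]; ring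
  calc ‖(NormedSpace.exp (t • ((-I) • H)) - NormedSpace.exp (t • ((-I) • H'))) ψ‖
      ≤ α * t * a + 2 * b + β * t := hsum
    _ ≤ 2 * Real.sqrt (Creal * (α * t)) + β * t := by linarith
    _ = 2 * Real.sqrt ((γ * (⟪ψ, H₀ ψ⟫_ℂ).re + δ) * α * t) + β * t := by rw [hfinal]
end

section
/- Let H be a bounded self-adjoint operator on a complex Hilbert space ℋ and let λ > 0. Then λ²·1 + H² is a positive invertible operator, and for every ψ ∈ ℋ one has ⟨ψ, H²(λ²·1 + H²)⁻¹ ψ⟩ ≤ (1/(2λ)) · ⟨ψ, |H| ψ⟩. -/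
open scoped InnerProductSpace
/-- **Key spectral estimate for the quantum speed limit.**
For a bounded self-adjoint operator `H` and `λ > 0`, the operator `λ²·1 + H²` is positive
and invertible, and `⟨ψ, H²(λ²·1 + H²)⁻¹ ψ⟩ ≤ (2λ)⁻¹ ⟨ψ, |H| ψ⟩` for all `ψ`. -/
theorem spectral_estimate_high_energy_component
    {ℋ : Type*} [NormedAddCommGroup ℋ] [InnerProductSpace ℂ ℋ] [CompleteSpace ℋ]
    (H : ℋ →L[ℂ] ℋ) (hH : IsSelfAdjoint H) (lam : ℝ) (hlam : 0 < lam) :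
    IsUnit ((lam ^ 2 : ℂ) • (1 : ℋ →L[ℂ] ℋ) + H ^ 2) ∧
    ContinuousLinearMap.IsPositive ((lam ^ 2 : ℂ) • (1 : ℋ →L[ℂ] ℋ) + H ^ 2) ∧
    ∀ ψ : ℋ,
      (⟪ψ, ((H ^ 2) * Ring.inverse ((lam ^ 2 : ℂ) • (1 : ℋ →L[ℂ] ℋ) + H ^ 2)) ψ⟫_ℂ).re ≤
        (1 / (2 * lam)) * (⟪ψ, (cfc (fun t : ℝ => |t|) H) ψ⟫_ℂ).re := by
  have hsmul : ((lam ^ 2 : ℂ) • (1 : ℋ →L[ℂ] ℋ)) = algebraMap ℝ (ℋ →L[ℂ] ℋ) (lam ^ 2) := by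
    rw [Algebra.algebraMap_eq_smul_one]
    norm_cast
  have hpos : ∀ t : ℝ, (0:ℝ) < lam ^ 2 + t ^ 2 := fun t => by positivity
  have ha : (lam ^ 2 : ℂ) • (1 : ℋ →L[ℂ] ℋ) + H ^ 2
      = cfc (fun t : ℝ => lam ^ 2 + t ^ 2) H := by
    rw [cfc_add (a := H) (fun _ => lam ^ 2) (fun t => t ^ 2), cfc_const _ _,
      hsmul, cfc_pow_id (R := ℝ) H 2]
  have hne : ∀ t ∈ spectrum ℝ H, lam ^ 2 + t ^ 2 ≠ 0 := fun t _ => (hpos t).ne'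
  have hUnit : IsUnit ((lam ^ 2 : ℂ) • (1 : ℋ →L[ℂ] ℋ) + H ^ 2) := by
    rw [ha]
    exact isUnit_cfc_iff (fun t : ℝ => lam ^ 2 + t ^ 2) H |>.mpr hne
  have hinv : Ring.inverse ((lam ^ 2 : ℂ) • (1 : ℋ →L[ℂ] ℋ) + H ^ 2)
      = cfc (fun t : ℝ => (lam ^ 2 + t ^ 2)⁻¹) H := by
    rw [ha, ← cfc_inv (a := H) (f := fun t : ℝ => lam ^ 2 + t ^ 2) hne]
  have hmul : (H ^ 2) * Ring.inverse ((lam ^ 2 : ℂ) • (1 : ℋ →L[ℂ] ℋ) + H ^ 2)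
      = cfc (fun t : ℝ => t ^ 2 * (lam ^ 2 + t ^ 2)⁻¹) H := by
    have hcont : ContinuousOn (fun t : ℝ => (lam ^ 2 + t ^ 2)⁻¹) (spectrum ℝ H) :=
      ((continuous_const.add (continuous_pow 2)).inv₀ fun t => (hpos t).ne').continuousOn
    rw [hinv, ← cfc_pow_id (R := ℝ) H 2,
      ← cfc_mul (fun t : ℝ => t ^ 2) (fun t : ℝ => (lam ^ 2 + t ^ 2)⁻¹) H (by fun_prop) hcont]
  -- positivity
  have hposop : ContinuousLinearMap.IsPositive
      ((lam ^ 2 : ℂ) • (1 : ℋ →L[ℂ] ℋ) + H ^ 2) := by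
    rw [← ContinuousLinearMap.nonneg_iff_isPositive, ha]
    exact cfc_nonneg fun t _ => (hpos t).le
  -- key pointwise bound, as operator inequality
  have hle : cfc (fun t : ℝ => t ^ 2 * (lam ^ 2 + t ^ 2)⁻¹) H
      ≤ cfc (fun t : ℝ => (1 / (2 * lam)) * |t|) H := by
    have hc1 : ContinuousOn (fun t : ℝ => t ^ 2 * (lam ^ 2 + t ^ 2)⁻¹) (spectrum ℝ H) :=
      (((continuous_pow 2).mul
        ((continuous_const.add (continuous_pow 2)).inv₀ fun t => (hpos t).ne')).continuousOn)
    apply cfc_mono ?_ hc1 (by fun_prop)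
    intro t _
    rw [div_mul_eq_mul_div, one_mul, ← div_eq_mul_inv, div_le_div_iff₀ (hpos t) (by positivity)]
    nlinarith [sq_nonneg (lam - |t|), abs_nonneg t, sq_abs t]
  have hR : cfc (fun t : ℝ => (1 / (2 * lam)) * |t|) H
      = (1 / (2 * lam)) • cfc (fun t : ℝ => |t|) H :=
    cfc_const_mul (1 / (2 * lam)) (fun t : ℝ => |t|) H
  refine ⟨hUnit, hposop, fun ψ => ?_⟩
  rw [hmul]
  rw [ContinuousLinearMap.le_def] at hle
  have h0 := hle.inner_nonneg_right ψ
  rw [ContinuousLinearMap.sub_apply, inner_sub_right] at h0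
  replace h0 := (RCLike.nonneg_iff.mp h0).1
  rw [map_sub, sub_nonneg] at h0
  refine h0.trans_eq ?_
  rw [hR, ContinuousLinearMap.smul_apply, ← Complex.coe_smul, inner_smul_right]
  simp [Complex.ofReal_mul, Complex.mul_re]
end

section
/- Let θ ∈ (0, π) and set n := ⌊π/θ⌋ + 1. Then the origin 0 lies in the interior of the convex hull (in ℂ ≅ ℝ²) of the finite set {e^{ikθ} : k = 0, 1, …, n}. -/
open Real Set

set_option maxHeartbeats 1000000 in
/-- **Spectral heart of multi-copy perfect discrimination.**
For `θ ∈ (0, π)` and `n = ⌊π/θ⌋ + 1`, the origin lies in the interior of the convex hull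
of `{e^{ikθ} : k = 0, …, n}` in `ℂ`. -/
theorem zero_mem_interior_convexHull_exp_arcs
    (θ : ℝ) (hθ : θ ∈ Set.Ioo 0 Real.pi) :
    (0 : ℂ) ∈ interior (convexHull ℝ
      ((fun k : ℕ => Complex.exp (Complex.I * (k * θ))) ''
        {k : ℕ | k ≤ Nat.floor (Real.pi / θ) + 1})) := by
  obtain ⟨hθ0, hθπ⟩ := hθ
  have hπ : (0:ℝ) < Real.pi := Real.pi_pos
  set m : ℕ := Nat.floor (Real.pi / θ) with hm
  set n : ℕ := m + 1 with hn
  set pt : ℕ → ℂ := fun k : ℕ => Complex.exp (Complex.I * (k * θ)) with hpt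
  set S : Set ℂ := pt '' {k : ℕ | k ≤ n} with hS
  set C : Set ℂ := convexHull ℝ S with hC
  -- basic arithmetic facts
  have hmθ : (m : ℝ) * θ ≤ Real.pi := by
    have h1 : (m : ℝ) ≤ Real.pi / θ := Nat.floor_le (by positivity)
    calc (m:ℝ) * θ ≤ (Real.pi / θ) * θ := by
          exact mul_le_mul_of_nonneg_right h1 hθ0.le
      _ = Real.pi := by field_simp
  have hmθ0 : (0:ℝ) ≤ (m : ℝ) * θ := by positivity
  have hnθ1 : Real.pi < (n : ℝ) * θ := by
    have h1 : Real.pi / θ < (n : ℝ) := by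
      have := Nat.lt_succ_floor (Real.pi / θ)
      exact_mod_cast this
    calc Real.pi = (Real.pi / θ) * θ := by field_simp
      _ < (n:ℝ) * θ := by exact mul_lt_mul_of_pos_right h1 hθ0
  have hnθ2 : (n : ℝ) * θ < 2 * Real.pi := by
    have : (n:ℝ) * θ = (m:ℝ) * θ + θ := by push_cast [hn]; ring
    linarith
  -- point formulas
  have hptk : ∀ k : ℕ, pt k = Complex.exp (((k * θ : ℝ) : ℂ) * Complex.I) := by
    intro k; simp only [hpt]; congr 1; push_cast; ring
  have hre : ∀ k : ℕ, (pt k).re = Real.cos ((k:ℝ) * θ) := fun k => by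
    rw [hptk k, Complex.exp_ofReal_mul_I_re]
  have him : ∀ k : ℕ, (pt k).im = Real.sin ((k:ℝ) * θ) := fun k => by
    rw [hptk k, Complex.exp_ofReal_mul_I_im]
  have hmemS : ∀ k : ℕ, k ≤ n → pt k ∈ S := fun k hk => ⟨k, hk, rfl⟩
  -- sine facts
  have hsin1 : 0 < Real.sin θ := Real.sin_pos_of_pos_of_lt_pi hθ0 hθπ
  have hsinn : Real.sin ((n:ℝ) * θ) < 0 := by
    have h1 : 0 < Real.sin ((n:ℝ) * θ - Real.pi) :=
      Real.sin_pos_of_pos_of_lt_pi (by linarith) (by linarith)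
    rw [Real.sin_sub_pi] at h1
    linarith
  have hsinm : 0 ≤ Real.sin ((m:ℝ) * θ) :=
    Real.sin_nonneg_of_nonneg_of_le_pi hmθ0 hmθ
  -- determinant
  set D : ℝ := (Real.cos θ - 1) * Real.sin ((n:ℝ) * θ)
      - (Real.cos ((n:ℝ) * θ) - 1) * Real.sin θ with hD
  have hDpos : 0 < D := by
    have e : Real.sin ((m:ℝ) * θ)
        = Real.sin ((n:ℝ) * θ) * Real.cos θ - Real.cos ((n:ℝ) * θ) * Real.sin θ := by
      rw [← Real.sin_sub]; congr 1; push_cast [hn]; ring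
    have e2 : D = Real.sin ((m:ℝ)*θ) + Real.sin θ - Real.sin ((n:ℝ)*θ) := by
      rw [hD, e]; ring
    rw [e2]; linarith
  -- complex form of points
  have hptc : ∀ k : ℕ, pt k
      = ((Real.cos ((k:ℝ)*θ) : ℝ) : ℂ) + ((Real.sin ((k:ℝ)*θ) : ℝ) : ℂ) * Complex.I := by
    intro k
    rw [hptk k, Complex.exp_mul_I, Complex.ofReal_cos, Complex.ofReal_sin]
  have hpt0 : pt 0 = 1 := by rw [hptc 0]; simp
  -- affine span is everything
  have hne : S.Nonempty := ⟨pt 0, hmemS 0 (Nat.zero_le n)⟩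
  have hspan : affineSpan ℝ S = ⊤ := by
    rw [AffineSubspace.affineSpan_eq_top_iff_vectorSpan_eq_top_of_nonempty ℝ ℂ ℂ hne]
    have hv1 : pt 1 - pt 0 ∈ vectorSpan ℝ S :=
      vsub_mem_vectorSpan ℝ (hmemS 1 (by omega)) (hmemS 0 (by omega))
    have hv2 : pt n - pt 0 ∈ vectorSpan ℝ S :=
      vsub_mem_vectorSpan ℝ (hmemS n le_rfl) (hmemS 0 (by omega))
    have c1 : ((1:ℕ):ℝ) * θ = θ := by norm_num
    have key1 : (Real.sin ((n:ℝ)*θ)) • (pt 1 - pt 0) - (Real.sin θ) • (pt n - pt 0)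
        = ((D : ℝ) : ℂ) := by
      rw [hptc 1, hptc n, hpt0, c1, hD]
      simp only [Complex.real_smul]
      push_cast
      ring
    have key2 : (Real.cos ((n:ℝ)*θ) - 1) • (pt 1 - pt 0) - (Real.cos θ - 1) • (pt n - pt 0)
        = ((-D : ℝ) : ℂ) * Complex.I := by
      rw [hptc 1, hptc n, hpt0, c1, hD]
      simp only [Complex.real_smul]
      push_cast
      ring
    have h1 : (1 : ℂ) ∈ vectorSpan ℝ S := by
      have hmem := Submodule.smul_mem _ (D⁻¹)
        (Submodule.sub_mem _ (Submodule.smul_mem _ (Real.sin ((n:ℝ)*θ)) hv1)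
          (Submodule.smul_mem _ (Real.sin θ) hv2))
      rw [key1] at hmem
      have : (D⁻¹ : ℝ) • ((D : ℝ) : ℂ) = 1 := by
        rw [Complex.real_smul, ← Complex.ofReal_mul, inv_mul_cancel₀ hDpos.ne']
        norm_num
      rwa [this] at hmem
    have hI : Complex.I ∈ vectorSpan ℝ S := by
      have hmem := Submodule.smul_mem _ ((-D)⁻¹)
        (Submodule.sub_mem _
          (Submodule.smul_mem _ (Real.cos ((n:ℝ)*θ) - 1) hv1)
          (Submodule.smul_mem _ (Real.cos θ - 1) hv2))
      rw [key2] at hmem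
      have : ((-D)⁻¹ : ℝ) • (((-D : ℝ) : ℂ) * Complex.I) = Complex.I := by
        rw [Complex.real_smul, ← mul_assoc, ← Complex.ofReal_mul,
          inv_mul_cancel₀ (neg_ne_zero.mpr hDpos.ne')]
        norm_num
      rwa [this] at hmem
    rw [eq_top_iff]
    rintro z -
    have hz : z = z.re • (1:ℂ) + z.im • Complex.I := by
      simp [Complex.real_smul, Complex.re_add_im]
    rw [hz]
    exact Submodule.add_mem _ (Submodule.smul_mem _ _ h1) (Submodule.smul_mem _ _ hI)
  obtain ⟨p, hp⟩ : (interior C).Nonempty :=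
    interior_convexHull_nonempty_iff_affineSpan_eq_top.mpr hspan
  by_contra h0
  obtain ⟨f, hf⟩ := geometric_hahn_banach_open_point
    ((convex_convexHull ℝ S).interior) isOpen_interior h0
  have hf0 : f (0:ℂ) = 0 := map_zero f
  have hfp : f p < 0 := by
    have := hf p hp
    rwa [hf0] at this
  -- f is nonpositive on S
  have hfS : ∀ s ∈ S, f s ≤ 0 := by
    intro s hs
    by_contra hpos
    push_neg at hpos
    set t : ℝ := f s / (f s - f p) with ht
    have hden : 0 < f s - f p := by linarith
    have ht0 : 0 < t := div_pos hpos hden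
    have ht1 : t < 1 := by
      rw [ht, div_lt_one hden]; linarith
    have hmem : t • p + (1 - t) • s ∈ interior C :=
      (convex_convexHull ℝ S).combo_interior_self_mem_interior hp
        (subset_convexHull ℝ S hs) ht0 (by linarith) (by ring)
    have hlt := hf _ hmem
    rw [hf0, map_add, map_smul, map_smul, smul_eq_mul, smul_eq_mul] at hlt
    have heq : t * f p + (1 - t) * f s = 0 := by
      rw [ht]; field_simp; ring
    linarith
  -- express f via a complex number w
  have hfz : ∀ z : ℂ, f z = z.re * f 1 + z.im * f Complex.I := by
    intro z
    have hz : z = z.re • (1:ℂ) + z.im • Complex.I := by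
      simp [Complex.real_smul, Complex.re_add_im]
    conv_lhs => rw [hz]
    rw [map_add, map_smul, map_smul, smul_eq_mul, smul_eq_mul]
  set w : ℂ := ((f 1 : ℝ) : ℂ) + ((f Complex.I : ℝ) : ℂ) * Complex.I with hw
  have hwre : w.re = f 1 := by rw [hw]; simp
  have hwim : w.im = f Complex.I := by rw [hw]; simp
  have hwne : w ≠ 0 := by
    intro h
    have h1 : f 1 = 0 := by rw [← hwre, h]; simp
    have h2 : f Complex.I = 0 := by rw [← hwim, h]; simp
    have : f p = 0 := by rw [hfz p, h1, h2]; ring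
    linarith
  have habs : 0 < ‖w‖ := norm_pos_iff.mpr hwne
  set φ : ℝ := Complex.arg w with hφ
  -- cos (kθ - φ) ≤ 0 for all k ≤ n
  have hcosle : ∀ k : ℕ, k ≤ n → Real.cos ((k:ℝ) * θ - φ) ≤ 0 := by
    intro k hk
    have h1 : f (pt k) ≤ 0 := hfS _ (hmemS k hk)
    rw [hfz, hre, him] at h1
    have e1 : ‖w‖ * Real.cos φ = f 1 := by
      rw [hφ, Complex.norm_mul_cos_arg, hwre]
    have e2 : ‖w‖ * Real.sin φ = f Complex.I := by
      rw [hφ, Complex.norm_mul_sin_arg, hwim]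
    have key : ‖w‖ * Real.cos ((k:ℝ) * θ - φ) ≤ 0 := by
      rw [Real.cos_sub]
      calc ‖w‖ * (Real.cos ((k:ℝ)*θ) * Real.cos φ + Real.sin ((k:ℝ)*θ) * Real.sin φ)
          = Real.cos ((k:ℝ)*θ) * (‖w‖ * Real.cos φ)
            + Real.sin ((k:ℝ)*θ) * (‖w‖ * Real.sin φ) := by ring
        _ = Real.cos ((k:ℝ)*θ) * f 1 + Real.sin ((k:ℝ)*θ) * f Complex.I := by rw [e1, e2]
        _ ≤ 0 := h1
    nlinarith
  -- key combinatorial lemma: a point of positive cosine exists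
  have main : ∀ ψ : ℝ, Real.pi/2 ≤ ψ → ψ ≤ 3*Real.pi/2 →
      ∃ k : ℕ, k ≤ n ∧ 0 < Real.cos ((k:ℝ) * θ - ψ) := by
    intro ψ h1 h2
    set x : ℝ := (ψ - Real.pi/2)/θ with hx
    have hx0 : 0 ≤ x := by
      apply div_nonneg _ hθ0.le; linarith
    have hxθ : x * θ = ψ - Real.pi/2 := div_mul_cancel₀ _ hθ0.ne'
    have hk1 : x < (Nat.floor x : ℝ) + 1 := Nat.lt_floor_add_one x
    have hk2 : (Nat.floor x : ℝ) ≤ x := Nat.floor_le hx0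
    refine ⟨Nat.floor x + 1, ?_, ?_⟩
    · have hxle : x ≤ Real.pi / θ := by
        rw [hx, div_le_div_iff_of_pos_right hθ0]; linarith
      have := Nat.floor_le_floor hxle
      omega
    · have hcast : ((Nat.floor x + 1 : ℕ) : ℝ) = (Nat.floor x : ℝ) + 1 := by push_cast; ring
      apply Real.cos_pos_of_mem_Ioo
      constructor
      · rw [hcast]
        have h3 : x * θ < ((Nat.floor x : ℝ) + 1) * θ := mul_lt_mul_of_pos_right hk1 hθ0
        linarith
      · rw [hcast]
        have h4 : ((Nat.floor x : ℝ) + 1) * θ ≤ (x + 1) * θ :=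
          mul_le_mul_of_nonneg_right (by linarith) hθ0.le
        have h5 : (x + 1) * θ = (ψ - Real.pi/2) + θ := by rw [add_mul, hxθ]; ring
        linarith
  -- final case analysis on φ = arg w
  rcases le_or_gt (Real.pi/2) φ with hcase | hcase
  · obtain ⟨k, hk, hpos⟩ := main φ hcase (by linarith [Complex.arg_le_pi w])
    exact absurd (hcosle k hk) (not_le.mpr hpos)
  · rcases le_or_gt φ (-(Real.pi/2)) with hcase2 | hcase2
    · have harg := Complex.neg_pi_lt_arg w
      obtain ⟨k, hk, hpos⟩ := main (φ + 2*Real.pi) (by linarith) (by linarith)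
      have e : Real.cos ((k:ℝ)*θ - (φ + 2*Real.pi)) = Real.cos ((k:ℝ)*θ - φ) := by
        rw [show (k:ℝ)*θ - (φ + 2*Real.pi) = ((k:ℝ)*θ - φ) - 2*Real.pi by ring,
          Real.cos_sub_two_pi]
      rw [e] at hpos
      exact absurd (hcosle k hk) (not_le.mpr hpos)
    · have h0c := hcosle 0 (Nat.zero_le n)
      have e : Real.cos (((0:ℕ):ℝ)*θ - φ) = Real.cos φ := by
        norm_num
      rw [e] at h0c
      have := Real.cos_pos_of_mem_Ioo ⟨hcase2, hcase⟩
      linarith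
end

section
/- Let w, w' be complex numbers with |w| = |w'| = 1 and w ≠ w'. Then there exists a positive integer n such that 0 lies in the convex hull (in ℂ ≅ ℝ²) of the finite set {w^k · (w')^{n−k} : k = 0, 1, …, n}. -/
open Complex

/-- If `1`, a point in the closed second quadrant, and a point in the closed third quadrant
(one of them off the real axis) all lie in `S`, then `0` lies in the convex hull of `S`. -/
lemma zero_mem_hull_aux {S : Set ℂ} {a b : ℂ}
    (h1 : (1:ℂ) ∈ S) (ha : a ∈ S) (hb : b ∈ S)
    (har : a.re ≤ 0) (hbr : b.re ≤ 0) (hai : 0 ≤ a.im) (hbi : b.im ≤ 0)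
    (hstrict : 0 < a.im ∨ b.im < 0) :
    (0:ℂ) ∈ convexHull ℝ S := by
  have hC : Convex ℝ (convexHull ℝ S) := convex_convexHull ℝ S
  have comb : ∀ x y : ℂ, x ∈ convexHull ℝ S → y ∈ convexHull ℝ S →
      ∀ t v : ℝ, 0 ≤ t → 0 ≤ v → t + v = 1 → t • x + v • y ∈ convexHull ℝ S :=
    fun x y hx hy t v ht hv htv => hC hx hy ht hv htv
  have h1' : (1:ℂ) ∈ convexHull ℝ S := subset_convexHull ℝ S h1
  have ha' : a ∈ convexHull ℝ S := subset_convexHull ℝ S ha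
  have hb' : b ∈ convexHull ℝ S := subset_convexHull ℝ S hb
  set s : ℝ := -b.im with hsdef
  set u : ℝ := a.im with hudef
  have hs : 0 ≤ s := by simp only [hsdef]; linarith
  have hu : 0 ≤ u := hai
  have hT : 0 < s + u := by
    rcases hstrict with h | h
    · have : 0 < u := h
      linarith
    · have : 0 < s := by simp only [hsdef]; linarith
      linarith
  have hq := comb a b ha' hb' (s/(s+u)) (u/(s+u)) (div_nonneg hs hT.le)
    (div_nonneg hu hT.le) (by field_simp)
  set q : ℂ := (s/(s+u)) • a + (u/(s+u)) • b with hqdef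
  have hqim : q.im = 0 := by
    have : q.im = (s/(s+u)) * a.im + (u/(s+u)) * b.im := by
      simp only [hqdef, Complex.add_im, Complex.smul_im, smul_eq_mul]
    rw [this, hsdef, hudef]
    field_simp
    ring
  have hqre : q.re ≤ 0 := by
    have : q.re = (s/(s+u)) * a.re + (u/(s+u)) * b.re := by
      simp only [hqdef, Complex.add_re, Complex.smul_re, smul_eq_mul]
    rw [this]
    have k1 : s/(s+u) * a.re ≤ 0 := mul_nonpos_of_nonneg_of_nonpos (div_nonneg hs hT.le) har
    have k2 : u/(s+u) * b.re ≤ 0 := mul_nonpos_of_nonneg_of_nonpos (div_nonneg hu hT.le) hbr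
    linarith
  have hd : (0:ℝ) < 1 - q.re := by linarith
  have key : (-q.re/(1-q.re)) • (1:ℂ) + (1/(1-q.re)) • q = 0 := by
    apply Complex.ext
    · simp only [Complex.add_re, Complex.smul_re, Complex.one_re, smul_eq_mul, mul_one,
        Complex.zero_re]
      field_simp
      ring
    · simp only [Complex.add_im, Complex.smul_im, Complex.one_im, smul_eq_mul, mul_zero,
        hqim, Complex.zero_im, zero_add]
  have := comb 1 q h1' hq (-q.re/(1-q.re)) (1/(1-q.re))
    (div_nonneg (by linarith) hd.le) (div_nonneg zero_le_one hd.le)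
    (by field_simp; ring)
  rwa [key] at this

/-- `sin x ≤ 0` on `[π, 2π]`. -/
lemma sin_nonpos_arc {x : ℝ} (h1 : Real.pi ≤ x) (h2 : x ≤ Real.pi + Real.pi) :
    Real.sin x ≤ 0 := by
  have h := Real.sin_nonneg_of_nonneg_of_le_pi (x := x - Real.pi) (by linarith) (by linarith)
  rw [Real.sin_sub_pi] at h
  linarith

/-- Hitting a target arc with multiples of a small positive step. -/
lemma exists_mul_mem_Icc {φ α : ℝ} (hφ : 0 < φ) (hα : 0 < α) :
    ∃ j : ℕ, 1 ≤ j ∧ α ≤ j * φ ∧ j * φ < α + φ := by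
  refine ⟨⌈α / φ⌉₊, ?_, ?_, ?_⟩
  · exact Nat.one_le_ceil_iff.mpr (div_pos hα hφ)
  · have := Nat.le_ceil (α / φ)
    calc α = (α / φ) * φ := by field_simp
    _ ≤ (⌈α / φ⌉₊ : ℝ) * φ := by gcongr
  · have := Nat.ceil_lt_add_one (le_of_lt (div_pos hα hφ))
    calc (⌈α / φ⌉₊ : ℝ) * φ < (α / φ + 1) * φ := by gcongr
    _ = α + φ := by field_simp

/-- Key lemma: for unimodular `z ≠ 1`, the origin is in the convex hull of an initial
segment of powers of `z`. -/
lemma zero_mem_hull_powers {z : ℂ} (hz : ‖z‖ = 1) (hz1 : z ≠ 1) :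
    ∃ n : ℕ, 0 < n ∧ (0:ℂ) ∈ convexHull ℝ ((fun k : ℕ => z ^ k) '' {k : ℕ | k ≤ n}) := by
  by_cases hroot : ∃ m : ℕ, 0 < m ∧ z ^ m = 1
  · -- root of unity case: the centroid of a full period is `0`
    obtain ⟨m, hm, hzm⟩ := hroot
    have hm2 : 2 ≤ m := by
      rcases Nat.lt_or_ge m 2 with h | h
      · interval_cases m
        exact absurd (by simpa using hzm) hz1
      · exact h
    refine ⟨m - 1, by omega, ?_⟩
    have hsum : ∑ i ∈ Finset.range m, z ^ i = 0 := by
      rw [geom_sum_eq hz1, hzm]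
      simp
    have hcm : (Finset.range m).centerMass (fun _ => (1:ℝ)) (fun i => z ^ i) = 0 := by
      rw [Finset.centerMass]
      simp [hsum]
    have := Finset.centerMass_mem_convexHull (Finset.range m) (w := fun _ => (1:ℝ))
      (z := fun i => z ^ i) (s := (fun k : ℕ => z ^ k) '' {k : ℕ | k ≤ m - 1})
      (fun i _ => zero_le_one)
      (by simpa using hm)
      (fun i hi => ⟨i, by simp only [Set.mem_setOf_eq]; simp at hi; omega, rfl⟩)
    rwa [hcm] at this
  · push_neg at hroot
    -- find p ≥ 1 with z ^ p close to 1
    obtain ⟨b, -, g, hg, htend⟩ := tendsto_subseq_of_bounded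
      (Metric.isBounded_closedBall (x := (0:ℂ)) (r := 1))
      (x := fun n => z ^ n)
      (fun n => by simp [Metric.mem_closedBall, Complex.dist_eq, map_pow, hz])
    rw [Metric.tendsto_atTop] at htend
    obtain ⟨N, hN⟩ := htend (1/8) (by norm_num)
    set p : ℕ := g (N + 1) - g N with hp
    have hgN : g N < g (N + 1) := hg (Nat.lt_succ_self N)
    have hp1 : 1 ≤ p := by omega
    have hclose : ‖z ^ p - 1‖ < 1/4 := by
      have h1 := hN N le_rfl
      have h2 := hN (N + 1) (Nat.le_succ N)
      have hd : dist (z ^ g (N+1)) (z ^ g N) < 1/4 := by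
        calc dist (z ^ g (N+1)) (z ^ g N) ≤ dist (z ^ g (N+1)) b + dist (z ^ g N) b :=
          dist_triangle_right _ _ _
        _ < 1/4 := by simp only [Function.comp] at h1 h2; linarith
      have hsum' : g N + p = g (N + 1) := by omega
      have heq : z ^ g (N+1) - z ^ g N = z ^ g N * (z ^ p - 1) := by
        rw [mul_sub, mul_one, ← pow_add, hsum']
      rw [Complex.dist_eq, heq, norm_mul, norm_pow, hz, one_pow, one_mul] at hd
      exact hd
    have hzp : ‖z ^ p‖ = 1 := by rw [norm_pow, hz, one_pow]
    have hzpne : z ^ p ≠ 1 := hroot p (by omega)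
    set φ : ℝ := Complex.arg (z ^ p) with hφdef
    have hexp : z ^ p = Complex.exp (φ * Complex.I) := by
      conv_lhs => rw [← Complex.norm_mul_exp_arg_mul_I (z ^ p)]
      rw [hzp]
      simp [hφdef]
    have hφne : φ ≠ 0 := by
      intro h
      rw [h] at hexp
      simp at hexp
      exact hzpne hexp
    -- |φ| ≤ π/4
    have hre : (3:ℝ)/4 ≤ (z ^ p).re := by
      have h3 : |(z ^ p - 1).re| ≤ ‖z ^ p - 1‖ := Complex.abs_re_le_norm _
      have h2 : (z ^ p - 1).re = (z ^ p).re - 1 := by simp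
      rw [h2] at h3
      have := abs_le.mp h3
      linarith
    have hφsmall : |φ| ≤ Real.pi / 4 := by
      by_contra hcon
      push_neg at hcon
      have hcos : Real.cos |φ| < Real.cos (Real.pi / 4) :=
        Real.cos_lt_cos_of_nonneg_of_le_pi (by positivity) (Complex.abs_arg_le_pi _) hcon
      rw [Real.cos_abs, Real.cos_pi_div_four] at hcos
      have hcosφ : Real.cos φ = (z ^ p).re := by
        rw [hφdef, Complex.cos_arg (by intro h; rw [h] at hzp; simp at hzp), hzp, div_one]
      have hs2 : Real.sqrt 2 < 3/2 := by
        rw [show (3:ℝ)/2 = Real.sqrt ((3/2)^2) by rw [Real.sqrt_sq]; norm_num]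
        apply Real.sqrt_lt_sqrt <;> norm_num
      rw [hcosφ] at hcos
      linarith
    have hπ := Real.pi_gt_three
    -- powers of z^p are points exp(j φ I)
    have hpow : ∀ j : ℕ, z ^ (p * j) = Complex.exp ((j * φ : ℝ) * Complex.I) := by
      intro j
      rw [pow_mul, hexp, ← Complex.exp_nat_mul]
      push_cast
      ring_nf
    -- reduce to finding suitable angles
    have main : ∀ ja la : ℕ, 1 ≤ ja → 1 ≤ la →
        Real.cos (ja * φ) ≤ 0 → Real.cos (la * φ) ≤ 0 →
        0 ≤ Real.sin (ja * φ) → Real.sin (la * φ) ≤ 0 →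
        (0 < Real.sin (ja * φ) ∨ Real.sin (la * φ) < 0) →
        ∃ n : ℕ, 0 < n ∧ (0:ℂ) ∈ convexHull ℝ ((fun k : ℕ => z ^ k) '' {k : ℕ | k ≤ n}) := by
      intro ja la hja hla hcja hcla hsja hsla hstr
      refine ⟨p * max ja la, by positivity, ?_⟩
      apply zero_mem_hull_aux (a := z ^ (p * ja)) (b := z ^ (p * la))
      · exact ⟨0, by simp, by simp⟩
      · exact ⟨p * ja, by simpa using Nat.mul_le_mul_left p (le_max_left ja la), rfl⟩
      · exact ⟨p * la, by simpa using Nat.mul_le_mul_left p (le_max_right ja la), rfl⟩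
      · rw [hpow ja, Complex.exp_ofReal_mul_I_re]; exact hcja
      · rw [hpow la, Complex.exp_ofReal_mul_I_re]; exact hcla
      · rw [hpow ja, Complex.exp_ofReal_mul_I_im]; exact hsja
      · rw [hpow la, Complex.exp_ofReal_mul_I_im]; exact hsla
      · rcases hstr with h | h
        · left; rw [hpow ja, Complex.exp_ofReal_mul_I_im]; exact h
        · right; rw [hpow la, Complex.exp_ofReal_mul_I_im]; exact h
    rcases lt_or_gt_of_ne hφne with hneg | hpos
    · -- φ < 0 : work with ψ = -φ
      set ψ : ℝ := -φ with hψdef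
      have hψpos : 0 < ψ := by simp only [hψdef]; linarith
      have hψsmall : ψ ≤ Real.pi / 4 := by
        have := abs_le.mp hφsmall
        simp only [hψdef]
        linarith
      obtain ⟨ja, hja, hja1, hja2⟩ := exists_mul_mem_Icc hψpos
        (show (0:ℝ) < Real.pi by linarith)
      obtain ⟨la, hla, hla1, hla2⟩ := exists_mul_mem_Icc hψpos
        (show (0:ℝ) < Real.pi / 2 by linarith)
      have eja : (ja : ℝ) * φ = -(ja * ψ) := by simp only [hψdef]; ring
      have ela : (la : ℝ) * φ = -(la * ψ) := by simp only [hψdef]; ring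
      apply main ja la hja hla
      · rw [eja, Real.cos_neg]
        exact Real.cos_nonpos_of_pi_div_two_le_of_le (by linarith) (by linarith)
      · rw [ela, Real.cos_neg]
        exact Real.cos_nonpos_of_pi_div_two_le_of_le (by linarith) (by linarith)
      · rw [eja, Real.sin_neg]
        have := sin_nonpos_arc (x := ja * ψ) (by linarith) (by linarith)
        linarith
      · rw [ela, Real.sin_neg]
        have := Real.sin_pos_of_pos_of_lt_pi (x := la * ψ) (by linarith) (by linarith)
        linarith
      · right
        rw [ela, Real.sin_neg]
        have := Real.sin_pos_of_pos_of_lt_pi (x := la * ψ) (by linarith) (by linarith)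
        linarith
    · -- φ > 0
      have hφ4 : φ ≤ Real.pi / 4 := by
        have := abs_le.mp hφsmall
        linarith
      obtain ⟨ja, hja, hja1, hja2⟩ := exists_mul_mem_Icc hpos
        (show (0:ℝ) < Real.pi / 2 by linarith)
      obtain ⟨la, hla, hla1, hla2⟩ := exists_mul_mem_Icc hpos
        (show (0:ℝ) < Real.pi by linarith)
      apply main ja la hja hla
      · exact Real.cos_nonpos_of_pi_div_two_le_of_le (by linarith) (by linarith)
      · exact Real.cos_nonpos_of_pi_div_two_le_of_le (by linarith) (by linarith)
      · exact le_of_lt (Real.sin_pos_of_pos_of_lt_pi (by linarith) (by linarith))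
      · exact sin_nonpos_arc (by linarith) (by linarith)
      · left
        exact Real.sin_pos_of_pos_of_lt_pi (by linarith) (by linarith)

/-- **Acín's theorem at the level of spectra.**
If `w ≠ w'` are unimodular complex numbers, then for some finite number `n` of copies the
origin lies in the convex hull of `{w^k (w')^{n−k} : k = 0, …, n}`. -/
theorem zero_mem_convexHull_powers_of_distinct_unimodular
    (w w' : ℂ) (hw : ‖w‖ = 1) (hw' : ‖w'‖ = 1) (hne : w ≠ w') :
    ∃ n : ℕ, 0 < n ∧ (0 : ℂ) ∈ convexHull ℝ
      ((fun k : ℕ => w ^ k * w' ^ (n - k)) '' {k : ℕ | k ≤ n}) := by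
  have hw'0 : w' ≠ 0 := by intro h; rw [h] at hw'; simp at hw'
  set z : ℂ := w / w' with hzdef
  have hz : ‖z‖ = 1 := by rw [hzdef, norm_div, hw, hw']; norm_num
  have hz1 : z ≠ 1 := by
    intro h
    exact hne ((div_eq_one_iff_eq hw'0).mp h)
  obtain ⟨n, hn, hmem⟩ := zero_mem_hull_powers hz hz1
  refine ⟨n, hn, ?_⟩
  set L : ℂ →ₗ[ℝ] ℂ := LinearMap.mulLeft ℝ (w' ^ n) with hLdef
  have hL : L '' ((fun k : ℕ => z ^ k) '' {k : ℕ | k ≤ n})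
      = (fun k : ℕ => w ^ k * w' ^ (n - k)) '' {k : ℕ | k ≤ n} := by
    rw [Set.image_image]
    apply Set.image_congr
    intro k hk
    simp only [Set.mem_setOf_eq] at hk
    show w' ^ n * z ^ k = w ^ k * w' ^ (n - k)
    rw [hzdef, div_pow, pow_sub₀ w' hw'0 hk]
    field_simp
  have himg : (0:ℂ) ∈ L '' (convexHull ℝ ((fun k : ℕ => z ^ k) '' {k : ℕ | k ≤ n})) :=
    ⟨0, hmem, by simp⟩
  rwa [L.image_convexHull, hL] at himg
end

section
/- Let θ ∈ (0, π), E ≥ 0, and n be a natural number. Let p₀, p₁, …, p_n be nonnegative real numbers with Σ_{k=0}^n p_k = 1. If Σ_{k=0}^n k·p_k ≤ E and Σ_{k=0}^n p_k·e^{ikθ} = 0 (as a complex number), then E ≥ 1/12 + √6/(9θ). -/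
/-- For `x ≥ 0`, `1 - cos x ≤ x`. -/
lemma one_sub_cos_le {x : ℝ} (hx : 0 ≤ x) : 1 - Real.cos x ≤ x := by
  rcases le_or_gt x 2 with h | h
  · have h1 : 1 - x ^ 2 / 2 ≤ Real.cos x := Real.one_sub_sq_div_two_le_cos
    nlinarith
  · nlinarith [Real.neg_one_le_cos x]

/-- **Lower bound on the threshold energy for perfect discrimination (qubit example).**
If a probability distribution `p₀, …, p_n` has mean at most `E` and
`Σ p_k e^{ikθ} = 0`, then `E ≥ 1/12 + √6/(9θ)`. -/
theorem energy_lower_bound_of_vanishing_exponential_sum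
    (θ E : ℝ) (hθ : θ ∈ Set.Ioo 0 Real.pi) (hE : 0 ≤ E)
    (n : ℕ) (p : ℕ → ℝ)
    (hp : ∀ k ≤ n, 0 ≤ p k)
    (hsum : ∑ k ∈ Finset.range (n + 1), p k = 1)
    (hmean : ∑ k ∈ Finset.range (n + 1), (k : ℝ) * p k ≤ E)
    (hzero : ∑ k ∈ Finset.range (n + 1),
      (p k : ℂ) * Complex.exp (Complex.I * (k * θ)) = 0) :
    1 / 12 + Real.sqrt 6 / (9 * θ) ≤ E := by
  obtain ⟨hθ0, hθπ⟩ := hθ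
  -- Take real parts of the vanishing exponential sum.
  have hre : ∑ k ∈ Finset.range (n + 1), p k * Real.cos (k * θ) = 0 := by
    have h := congrArg Complex.re hzero
    rw [Complex.re_sum, Complex.zero_re] at h
    convert h using 2 with k hk
    rw [show Complex.I * ((k : ℂ) * (θ : ℂ)) = ((k * θ : ℝ) : ℂ) * Complex.I by push_cast; ring,
      Complex.re_ofReal_mul, Complex.exp_ofReal_mul_I_re]
  -- Deduce `1 ≤ θ * E` from `Σ p_k (1 - cos kθ) = 1` and `1 - cos x ≤ x`.
  have key : 1 ≤ θ * E := by
    have h1 : ∑ k ∈ Finset.range (n + 1), p k * (1 - Real.cos (k * θ)) = 1 := by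
      rw [Finset.sum_congr rfl (fun k _ => mul_sub (p k) 1 (Real.cos (k * θ))),
        Finset.sum_sub_distrib, hre]
      simpa using hsum
    have h2 : ∑ k ∈ Finset.range (n + 1), p k * (1 - Real.cos (k * θ))
        ≤ ∑ k ∈ Finset.range (n + 1), θ * ((k : ℝ) * p k) := by
      apply Finset.sum_le_sum
      intro k hk
      have hpk := hp k (Nat.lt_succ_iff.mp (Finset.mem_range.mp hk))
      have hx : (0:ℝ) ≤ (k : ℝ) * θ := by positivity
      have := one_sub_cos_le hx
      nlinarith
    rw [← Finset.mul_sum] at h2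
    have h3 : θ * (∑ k ∈ Finset.range (n + 1), (k : ℝ) * p k) ≤ θ * E :=
      mul_le_mul_of_nonneg_left hmean hθ0.le
    linarith
  have hEθ : 1 / θ ≤ E := by
    rw [div_le_iff₀ hθ0]
    linarith [key]
  -- Numeric comparison: since `θ < π < 12 - 4√6/3`, we have `1/12 + √6/(9θ) ≤ 1/θ`.
  have hs : Real.sqrt 6 ≤ 2.5 := by
    rw [show (2.5:ℝ) = Real.sqrt (2.5^2) by rw [Real.sqrt_sq]; norm_num]
    apply Real.sqrt_le_sqrt; norm_num
  have hπ : θ < 3.15 := hθπ.trans Real.pi_lt_d2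
  have : 1 / 12 + Real.sqrt 6 / (9 * θ) ≤ 1 / θ := by
    rw [div_add_div _ _ (by norm_num) (by positivity), div_le_div_iff₀ (by positivity) hθ0]
    nlinarith [Real.sqrt_nonneg 6]
  linarith
end

section
/- For every s ∈ (0, π/2] there exist a 2×2 positive semidefinite Hermitian complex matrix H whose smallest eigenvalue is 0 and a unit vector ψ ∈ ℂ² such that ⟨ψ, Hψ⟩ ≤ s and 1 − |⟨ψ, exp(−iH)ψ⟩|² ≥ 4·(s/π)·(1 − s/π). -/
open Matrix
open scoped ComplexOrder

/-- **Tightness of the `√(Et)` quantum speed limit (qubit construction).**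
For every `s ∈ (0, π/2]` there are a grounded `2×2` Hamiltonian `H` and a unit vector `ψ`
with `⟨ψ, Hψ⟩ ≤ s` and `1 − |⟨ψ, e^{−iH}ψ⟩|² ≥ 4(s/π)(1 − s/π)`. -/
theorem qubit_speed_limit_tightness
    (s : ℝ) (hs : s ∈ Set.Ioc 0 (Real.pi / 2)) :
    ∃ (H : Matrix (Fin 2) (Fin 2) ℂ) (ψ : Fin 2 → ℂ),
      H.PosSemidef ∧
      (∃ v : Fin 2 → ℂ, v ≠ 0 ∧ H *ᵥ v = 0) ∧
      star ψ ⬝ᵥ ψ = 1 ∧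
      (star ψ ⬝ᵥ (H *ᵥ ψ)).re ≤ s ∧
      4 * (s / Real.pi) * (1 - s / Real.pi) ≤
        1 - ‖star ψ ⬝ᵥ ((NormedSpace.exp ((-Complex.I) • H)) *ᵥ ψ)‖ ^ 2 := by
  obtain ⟨hs0, hs2⟩ := hs
  have hpi : (0:ℝ) < Real.pi := Real.pi_pos
  set p : ℝ := s / Real.pi with hp
  have hp0 : 0 ≤ p := le_of_lt (div_pos hs0 hpi)
  have hp1 : p ≤ 1 := by
    rw [hp, div_le_one hpi]; linarith
  set a : ℝ := Real.sqrt (1 - p) with ha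
  set b : ℝ := Real.sqrt p with hb
  have ha2 : a ^ 2 = 1 - p := Real.sq_sqrt (by linarith)
  have hb2 : b ^ 2 = p := Real.sq_sqrt hp0
  refine ⟨Matrix.diagonal ![0, (Real.pi : ℂ)], ![(a:ℂ), (b:ℂ)], ?_, ?_, ?_, ?_, ?_⟩
  · refine Matrix.posSemidef_diagonal_iff.mpr fun i => ?_
    fin_cases i
    · simp
    · show (0:ℂ) ≤ (Real.pi:ℂ)
      exact_mod_cast hpi.le
  · refine ⟨![1, 0], ?_, ?_⟩
    · intro h
      have := congrFun h 0
      simp at this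
    · funext i
      fin_cases i <;> simp [Matrix.mulVec, dotProduct, Fin.sum_univ_two]
  · have : ((a^2 + b^2 : ℝ) : ℂ) = 1 := by rw [ha2, hb2]; norm_num
    simp only [dotProduct, Fin.sum_univ_two, Pi.star_apply]
    push_cast at this ⊢
    simpa [sq, Complex.star_def, Complex.conj_ofReal] using this
  · have key : (star ![(a:ℂ), (b:ℂ)] ⬝ᵥ (Matrix.diagonal ![0, (Real.pi : ℂ)] *ᵥ ![(a:ℂ), (b:ℂ)]))
        = ((Real.pi * b^2 : ℝ) : ℂ) := by
      simp [dotProduct, Matrix.mulVec, Fin.sum_univ_two, Matrix.diagonal,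
        Complex.star_def, Complex.conj_ofReal]
      ring
    rw [key, hb2]
    simp [hp, mul_div_cancel₀ _ hpi.ne']
  · have hexp : NormedSpace.exp ((-Complex.I) • Matrix.diagonal ![0, (Real.pi : ℂ)])
        = Matrix.diagonal ![1, -1] := by
      rw [← Matrix.diagonal_smul, Matrix.exp_diagonal]
      have hfun : NormedSpace.exp ((-Complex.I) • ![0, (Real.pi : ℂ)]) = ![1, -1] := by
        rw [Pi.exp_def]
        funext i
        fin_cases i
        · show NormedSpace.exp (((-Complex.I) • ![0, (Real.pi : ℂ)]) 0) = 1
          simp [NormedSpace.exp_zero]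
        · show NormedSpace.exp (((-Complex.I) • ![0, (Real.pi : ℂ)]) 1) = -1
          have h1 : ((-Complex.I) • ![0, (Real.pi : ℂ)]) 1 = -(Real.pi * Complex.I) := by
            simp; ring
          rw [h1, ← Complex.exp_eq_exp_ℂ, Complex.exp_neg, Complex.exp_pi_mul_I]
          norm_num
      rw [hfun]
    rw [hexp]
    have key : (star ![(a:ℂ), (b:ℂ)] ⬝ᵥ (Matrix.diagonal ![1, -1] *ᵥ ![(a:ℂ), (b:ℂ)]))
        = ((a^2 - b^2 : ℝ) : ℂ) := by
      simp [dotProduct, Matrix.mulVec, Fin.sum_univ_two, Matrix.diagonal,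
        Complex.star_def, Complex.conj_ofReal]
      ring
    rw [key, Complex.norm_real, Real.norm_eq_abs, sq_abs, ha2, hb2]
    ring_nf
    nlinarith [sq_nonneg p]
end

section
/- Let m ≥ 1, ε > 0, and let S ∈ Sp_{2m}(ℝ) with ‖S − I‖_∞ ≤ ε. If S = O·P is the polar decomposition of S, with O a real orthogonal 2m×2m matrix and P a symmetric positive semidefinite 2m×2m matrix, then ‖O − I‖_∞ ≤ 3ε and ‖P − I‖_∞ ≤ 3ε. -/
open Matrix
open scoped Matrix.Norms.L2Operator InnerProductSpace MatrixOrder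

section Aux
set_option linter.unusedSectionVars false
variable {n : Type*} [Fintype n] [DecidableEq n]

noncomputable def eE (v : n → ℝ) : EuclideanSpace ℝ n := (WithLp.equiv 2 (n → ℝ)).symm v

lemma eE_inner (u v : n → ℝ) : ⟪eE u, eE v⟫_ℝ = u ⬝ᵥ v := by
  show ⟪WithLp.toLp 2 u, WithLp.toLp 2 v⟫_ℝ = _
  rw [EuclideanSpace.inner_toLp_toLp, star_trivial, dotProduct_comm]

lemma eE_norm_sq (u : n → ℝ) : ‖eE u‖ ^ 2 = u ⬝ᵥ u := by
  rw [← real_inner_self_eq_norm_sq, eE_inner]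

lemma mulVec_norm_le (A : Matrix n n ℝ) (v : n → ℝ) : ‖eE (A *ᵥ v)‖ ≤ ‖A‖ * ‖eE v‖ :=
  A.l2_opNorm_mulVec (eE v)

lemma opNorm_le_of (A : Matrix n n ℝ) {C : ℝ} (hC : 0 ≤ C)
    (h : ∀ v : n → ℝ, ‖eE (A *ᵥ v)‖ ≤ C * ‖eE v‖) : ‖A‖ ≤ C := by
  rw [Matrix.l2_opNorm_def]
  refine ContinuousLinearMap.opNorm_le_bound _ hC fun x => ?_
  simpa [eE, toEuclideanLin_apply] using h ((WithLp.equiv 2 (n → ℝ)) x)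

lemma orth_norm_one [Nonempty n] (M : Matrix n n ℝ) (hM : Mᵀ * M = 1) : ‖M‖ = 1 := by
  have h1 : ‖Mᴴ * M‖ = ‖M‖ * ‖M‖ := Matrix.l2_opNorm_conjTranspose_mul_self M
  rw [M.conjTranspose_eq_transpose_of_trivial, hM, norm_one] at h1
  rcases mul_self_eq_one_iff.mp h1.symm with h | h
  · exact h
  · nlinarith [norm_nonneg M]

lemma transpose_norm (M : Matrix n n ℝ) : ‖Mᵀ‖ = ‖M‖ := by
  rw [← M.conjTranspose_eq_transpose_of_trivial, Matrix.l2_opNorm_conjTranspose]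

end Aux

/-- The standard symplectic form `Ω`, the direct sum of `m` copies of `[[0,1],[-1,0]]`. -/
noncomputable def symplecticForm (m : ℕ) : Matrix (Fin 2 × Fin m) (Fin 2 × Fin m) ℝ :=
  Matrix.blockDiagonal fun _ => !![0, 1; -1, 0]

/-- `S ∈ Sp_{2m}(ℝ)`, i.e. `S Ω Sᵀ = Ω`. -/
def IsSymplectic {m : ℕ} (S : Matrix (Fin 2 × Fin m) (Fin 2 × Fin m) ℝ) : Prop :=
  S * symplecticForm m * Sᵀ = symplecticForm m

set_option maxHeartbeats 1000000 in
/-- **Stability of the polar decomposition near the identity.**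
If a symplectic `S` satisfies `‖S − I‖ ≤ ε` and `S = O·P` with `O` orthogonal and `P`
symmetric positive semidefinite, then `‖O − I‖ ≤ 3ε` and `‖P − I‖ ≤ 3ε`. -/
theorem polar_decomposition_stability
    (m : ℕ) (hm : 1 ≤ m) (ε : ℝ) (hε : 0 < ε)
    (S O P : Matrix (Fin 2 × Fin m) (Fin 2 × Fin m) ℝ)
    (hS : IsSymplectic S) (hSI : ‖S - 1‖ ≤ ε)
    (hO : O * Oᵀ = 1) (hP : P.PosSemidef)
    (hdecomp : S = O * P) :
    ‖O - 1‖ ≤ 3 * ε ∧ ‖P - 1‖ ≤ 3 * ε := by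
  haveI : Nonempty (Fin m) := ⟨⟨0, hm⟩⟩
  set Ω := symplecticForm m with hΩdef
  -- Ω is orthogonal
  have hΩorth : Ωᵀ * Ω = 1 := by
    have hT : (!![0, 1; -1, 0] : Matrix (Fin 2) (Fin 2) ℝ)ᵀ = !![0, -1; 1, 0] := by
      ext i j; fin_cases i <;> fin_cases j <;> rfl
    have h2 : (!![0, 1; -1, 0] : Matrix (Fin 2) (Fin 2) ℝ)ᵀ * !![0, 1; -1, 0] = 1 := by
      rw [hT]
      ext i j
      fin_cases i <;> fin_cases j <;>
        simp [Matrix.mul_apply, Fin.sum_univ_two, Matrix.one_apply]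
    rw [hΩdef, symplecticForm, Matrix.blockDiagonal_transpose, ← Matrix.blockDiagonal_mul]
    simp only [h2]
    exact Matrix.blockDiagonal_one
  have hΩorth' : Ω * Ωᵀ = 1 := mul_eq_one_comm.mp hΩorth
  have hΩn : ‖Ω‖ = 1 := orth_norm_one Ω hΩorth
  have hΩtn : ‖Ωᵀ‖ = 1 := by rw [transpose_norm, hΩn]
  -- basic norms
  set s := ‖S‖ with hsdef
  have hSn : s ≤ 1 + ε := by
    calc s = ‖S - 1 + 1‖ := by rw [sub_add_cancel]
    _ ≤ ‖S - 1‖ + ‖(1 : Matrix (Fin 2 × Fin m) (Fin 2 × Fin m) ℝ)‖ := norm_add_le _ _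
    _ ≤ ε + 1 := by rw [norm_one]; linarith
    _ = 1 + ε := by ring
  have hStn : ‖Sᵀ‖ = s := transpose_norm S
  have hStI : ‖Sᵀ - 1‖ ≤ ε := by
    have : (Sᵀ - 1) = (S - 1)ᵀ := by rw [Matrix.transpose_sub, Matrix.transpose_one]
    rw [this, transpose_norm]; exact hSI
  -- inverse of S
  set T := Ω * Sᵀ * Ωᵀ with hTdef
  have hST : S * T = 1 := by
    have := hS
    rw [IsSymplectic] at this
    calc S * T = (S * Ω * Sᵀ) * Ωᵀ := by rw [hTdef]; noncomm_ring
    _ = Ω * Ωᵀ := by rw [this]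
    _ = 1 := hΩorth'
  have hTn : ‖T‖ ≤ s := by
    calc ‖T‖ ≤ ‖Ω * Sᵀ‖ * ‖Ωᵀ‖ := Matrix.l2_opNorm_mul _ _
    _ ≤ ‖Ω‖ * ‖Sᵀ‖ * ‖Ωᵀ‖ := by
        have := Matrix.l2_opNorm_mul Ω Sᵀ
        have h0 : (0:ℝ) ≤ ‖Ωᵀ‖ := norm_nonneg _
        nlinarith
    _ = s := by rw [hΩn, hΩtn, hStn]; ring
  have hs0 : 0 < s := by
    rcases eq_or_lt_of_le (norm_nonneg S) with h | h
    · exfalso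
      have : S = 0 := by rwa [eq_comm, norm_eq_zero] at h
      rw [this, zero_mul] at hST
      exact one_ne_zero hST.symm
    · exact h
  -- O and P facts
  have hOO : Oᵀ * O = 1 := mul_eq_one_comm.mp hO
  have hOn : ‖O‖ = 1 := orth_norm_one O hOO
  have hOtn : ‖Oᵀ‖ = 1 := by rw [transpose_norm, hOn]
  have hPOS : P = Oᵀ * S := by rw [hdecomp, ← mul_assoc, hOO, one_mul]
  have hPn : ‖P‖ ≤ s := by
    calc ‖P‖ ≤ ‖Oᵀ‖ * ‖S‖ := hPOS ▸ Matrix.l2_opNorm_mul _ _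
    _ = s := by rw [hOtn, one_mul]
  set Q := T * O with hQdef
  have hPQ : P * Q = 1 := by
    rw [hPOS, hQdef]
    calc Oᵀ * S * (T * O) = Oᵀ * (S * T) * O := by noncomm_ring
    _ = 1 := by rw [hST, mul_one, hOO]
  have hQn : ‖Q‖ ≤ s := by
    calc ‖Q‖ ≤ ‖T‖ * ‖O‖ := Matrix.l2_opNorm_mul _ _
    _ ≤ s := by rw [hOn, mul_one]; exact hTn
  have hPsym : Pᵀ = P := by
    have := hP.1
    rwa [Matrix.IsHermitian, P.conjTranspose_eq_transpose_of_trivial] at this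
  -- ‖P² - 1‖ bound
  have hPP : P * P = Sᵀ * S := by
    nth_rewrite 1 [← hPsym]
    rw [hPOS, Matrix.transpose_mul, Matrix.transpose_transpose]
    calc Sᵀ * O * (Oᵀ * S) = Sᵀ * (O * Oᵀ) * S := by noncomm_ring
    _ = Sᵀ * S := by rw [hO, mul_one]
  have hPPI : ‖P * P - 1‖ ≤ (1 + s) * ε := by
    have hsplit : P * P - 1 = Sᵀ * (S - 1) + (Sᵀ - 1) := by
      rw [hPP]; noncomm_ring
    rw [hsplit]
    calc ‖Sᵀ * (S - 1) + (Sᵀ - 1)‖ ≤ ‖Sᵀ * (S - 1)‖ + ‖Sᵀ - 1‖ := norm_add_le _ _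
    _ ≤ ‖Sᵀ‖ * ‖S - 1‖ + ε := by
        have := Matrix.l2_opNorm_mul Sᵀ (S - 1)
        linarith
    _ ≤ s * ε + ε := by
        have := norm_nonneg (S - 1)
        nlinarith [hStn, hs0]
    _ = (1 + s) * ε := by ring
  -- positivity lower bound: ∀ v, ‖eE v‖² ≤ s * (v ⬝ᵥ P *ᵥ v)
  set R := CFC.sqrt P with hRdef
  have hRsym : Rᵀ = R := by
    have := (CFC.sqrt_nonneg P).posSemidef.1
    rwa [Matrix.IsHermitian, Matrix.conjTranspose_eq_transpose_of_trivial] at this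
  have hRR : R * R = P := CFC.sqrt_mul_sqrt_self P hP.nonneg
  have hRdot : ∀ u w : Fin 2 × Fin m → ℝ, u ⬝ᵥ (P *ᵥ w) = (R *ᵥ u) ⬝ᵥ (R *ᵥ w) := by
    intro u w
    rw [← hRR, ← Matrix.mulVec_mulVec, Matrix.dotProduct_mulVec u R,
      ← Matrix.mulVec_transpose, hRsym]
  have keylow : ∀ v : Fin 2 × Fin m → ℝ, ‖eE v‖ ^ 2 ≤ s * (v ⬝ᵥ (P *ᵥ v)) := by
    intro v
    set w := Q *ᵥ v with hwdef
    have h1 : v ⬝ᵥ v = (R *ᵥ v) ⬝ᵥ (R *ᵥ w) := by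
      rw [← hRdot v w, hwdef, Matrix.mulVec_mulVec, hPQ, Matrix.one_mulVec]
    have h2 : (R *ᵥ v) ⬝ᵥ (R *ᵥ w) ≤ ‖eE (R *ᵥ v)‖ * ‖eE (R *ᵥ w)‖ := by
      rw [← eE_inner]; exact real_inner_le_norm _ _
    have h3 : ‖eE (R *ᵥ v)‖ ^ 2 = v ⬝ᵥ (P *ᵥ v) := by rw [eE_norm_sq, ← hRdot]
    have h4 : ‖eE (R *ᵥ w)‖ ^ 2 ≤ s * ‖eE v‖ ^ 2 := by
      rw [eE_norm_sq, ← hRdot]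
      have : w ⬝ᵥ (P *ᵥ w) = w ⬝ᵥ v := by
        rw [hwdef, Matrix.mulVec_mulVec, hPQ, Matrix.one_mulVec]
      rw [this]
      calc w ⬝ᵥ v ≤ ‖eE w‖ * ‖eE v‖ := by rw [← eE_inner]; exact real_inner_le_norm _ _
      _ ≤ (s * ‖eE v‖) * ‖eE v‖ := by
          have h0 : (0:ℝ) ≤ ‖eE v‖ := norm_nonneg _
          refine mul_le_mul_of_nonneg_right ?_ h0
          calc ‖eE w‖ ≤ ‖Q‖ * ‖eE v‖ := mulVec_norm_le Q v
          _ ≤ s * ‖eE v‖ := mul_le_mul_of_nonneg_right hQn h0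
      _ = s * ‖eE v‖ ^ 2 := by ring
    have hv2 : ‖eE v‖ ^ 2 = v ⬝ᵥ v := eE_norm_sq v
    set c := ‖eE v‖ with hcdef
    have hc0 : 0 ≤ c := norm_nonneg _
    have ha0 : 0 ≤ v ⬝ᵥ (P *ᵥ v) := by
      have := hP.dotProduct_mulVec_nonneg v
      simpa using this
    rcases eq_or_lt_of_le hc0 with h | h
    · rw [← h]
      simpa using mul_nonneg hs0.le ha0
    · have h5 : c ^ 2 ≤ ‖eE (R *ᵥ v)‖ * ‖eE (R *ᵥ w)‖ := by rw [hv2, h1]; exact h2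
      have h6 : c ^ 2 * c ^ 2 ≤ (‖eE (R *ᵥ v)‖ * ‖eE (R *ᵥ w)‖) * (‖eE (R *ᵥ v)‖ * ‖eE (R *ᵥ w)‖) :=
        mul_self_le_mul_self (by positivity) h5
      have h7 : (‖eE (R *ᵥ v)‖ * ‖eE (R *ᵥ w)‖) * (‖eE (R *ᵥ v)‖ * ‖eE (R *ᵥ w)‖)
          = ‖eE (R *ᵥ v)‖ ^ 2 * ‖eE (R *ᵥ w)‖ ^ 2 := by ring
      have h8 : ‖eE (R *ᵥ v)‖ ^ 2 * ‖eE (R *ᵥ w)‖ ^ 2 ≤ (v ⬝ᵥ (P *ᵥ v)) * (s * c ^ 2) := by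
        rw [h3]; exact mul_le_mul_of_nonneg_left h4 ha0
      have h9 : c ^ 2 * c ^ 2 ≤ (s * (v ⬝ᵥ (P *ᵥ v))) * c ^ 2 := by
        calc c ^ 2 * c ^ 2 ≤ (v ⬝ᵥ (P *ᵥ v)) * (s * c ^ 2) := by
              rw [← h7] at h8; linarith
        _ = (s * (v ⬝ᵥ (P *ᵥ v))) * c ^ 2 := by ring
      exact le_of_mul_le_mul_right h9 (by positivity)
  -- upper bound: ‖P - 1‖ ≤ s * ε
  have hPm1 : ‖P - 1‖ ≤ s * ε := by
    refine opNorm_le_of _ (by positivity) fun v => ?_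
    set w := (P - 1) *ᵥ v with hwdef
    -- (1 + 1/s) ‖eE w‖² ≤ ‖eE ((P+1) *ᵥ w)‖ * ‖eE w‖
    have hup : (1 + 1/s) * ‖eE w‖ ^ 2 ≤ ‖eE ((P + 1) *ᵥ w)‖ * ‖eE w‖ := by
      have hin : ((P + 1) *ᵥ w) ⬝ᵥ w = w ⬝ᵥ (P *ᵥ w) + ‖eE w‖ ^ 2 := by
        rw [Matrix.add_mulVec, Matrix.one_mulVec, add_dotProduct,
          dotProduct_comm, eE_norm_sq]
      have hlow := keylow w
      have h2 : ((P + 1) *ᵥ w) ⬝ᵥ w ≤ ‖eE ((P + 1) *ᵥ w)‖ * ‖eE w‖ := by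
        rw [← eE_inner]; exact real_inner_le_norm _ _
      have h3 : (1/s) * ‖eE w‖ ^ 2 ≤ w ⬝ᵥ (P *ᵥ w) := by
        rw [div_mul_eq_mul_div, one_mul, div_le_iff₀ hs0]
        linarith [keylow w, mul_comm s (w ⬝ᵥ (P *ᵥ w))]
      linarith
    have hcomp : (P + 1) *ᵥ w = (P * P - 1) *ᵥ v := by
      rw [hwdef, Matrix.mulVec_mulVec]
      noncomm_ring
    have hbound : ‖eE ((P + 1) *ᵥ w)‖ ≤ (1 + s) * ε * ‖eE v‖ := by
      rw [hcomp]
      calc ‖eE ((P * P - 1) *ᵥ v)‖ ≤ ‖P * P - 1‖ * ‖eE v‖ := mulVec_norm_le _ _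
      _ ≤ (1 + s) * ε * ‖eE v‖ := by
          have h0 : (0:ℝ) ≤ ‖eE v‖ := norm_nonneg _
          nlinarith
    rcases eq_or_lt_of_le (norm_nonneg (eE w)) with h | h
    · rw [← h]
      exact mul_nonneg (mul_nonneg hs0.le hε.le) (norm_nonneg _)
    · have h1s : 0 < 1 + 1/s := by positivity
      have hkey : ((1 + 1/s) * ‖eE w‖) * ‖eE w‖ ≤ ((1 + s) * ε * ‖eE v‖) * ‖eE w‖ := by
        calc ((1 + 1/s) * ‖eE w‖) * ‖eE w‖ = (1 + 1/s) * ‖eE w‖ ^ 2 := by ring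
        _ ≤ ‖eE ((P + 1) *ᵥ w)‖ * ‖eE w‖ := hup
        _ ≤ ((1 + s) * ε * ‖eE v‖) * ‖eE w‖ := mul_le_mul_of_nonneg_right hbound h.le
      have hkey2 : (1 + 1/s) * ‖eE w‖ ≤ (1 + s) * ε * ‖eE v‖ :=
        le_of_mul_le_mul_right hkey h
      have hfact : (1 + s) * ε * ‖eE v‖ = (1 + 1/s) * (s * ε * ‖eE v‖) := by
        field_simp; ring
      rw [hfact] at hkey2
      exact le_of_mul_le_mul_left hkey2 h1s
  -- O bound
  have hOm1 : ‖O - 1‖ ≤ s * ε + ε := by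
    have hsplit : O - 1 = O * (1 - P) + (S - 1) := by
      rw [hdecomp]; noncomm_ring
    rw [hsplit]
    calc ‖O * (1 - P) + (S - 1)‖ ≤ ‖O * (1 - P)‖ + ‖S - 1‖ := norm_add_le _ _
    _ ≤ ‖O‖ * ‖1 - P‖ + ε := by
        have := Matrix.l2_opNorm_mul O (1 - P)
        linarith
    _ = ‖P - 1‖ + ε := by rw [hOn, one_mul, ← norm_neg, neg_sub]
    _ ≤ s * ε + ε := by linarith
  constructor
  · rcases le_or_gt ε 1 with h | h
    · have : s ≤ 2 := by linarith
      nlinarith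
    · calc ‖O - 1‖ ≤ ‖O‖ + ‖(1 : Matrix (Fin 2 × Fin m) (Fin 2 × Fin m) ℝ)‖ := norm_sub_le _ _
      _ = 2 := by rw [hOn, norm_one]; norm_num
      _ ≤ 3 * ε := by linarith
  · rcases le_or_gt ε 1 with h | h
    · have : s ≤ 2 := by linarith
      nlinarith
    · calc ‖P - 1‖ ≤ ‖P‖ + ‖(1 : Matrix (Fin 2 × Fin m) (Fin 2 × Fin m) ℝ)‖ := norm_sub_le _ _
      _ ≤ s + 1 := by rw [norm_one]; linarith
      _ ≤ 3 * ε := by linarith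
end

section
/- Fix μ ∈ [0,1) and let ε, δ ≥ 0 satisfy δ + ε ≤ μ. Let V, W, Ṽ, W̃ be real n×n matrices such that ‖V − Ṽ‖_∞ ≤ ε, ‖W − W̃‖_∞ ≤ ε, ‖V − I‖_∞ ≤ δ and ‖W − I‖_∞ ≤ δ. Then V, W, Ṽ, W̃ are all invertible and ‖VWV⁻¹W⁻¹ − ṼW̃Ṽ⁻¹W̃⁻¹‖_∞ ≤ ((16 − 12μ + 4μ²)/(1−μ)³)·δ·ε + ((7 − 9μ + 13μ² − 3μ³)/(1−μ)⁴)·ε². -/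
open Matrix
open scoped Matrix.Norms.L2Operator
set_option maxHeartbeats 1600000

private lemma aux_norm_one (n : ℕ) : ‖(1 : Matrix (Fin n) (Fin n) ℝ)‖ ≤ 1 := by
  rw [Matrix.cstar_norm_def, _root_.map_one]
  exact ContinuousLinearMap.norm_id_le

private lemma aux_isUnit {n : ℕ} {M : Matrix (Fin n) (Fin n) ℝ} (h : ‖1 - M‖ < 1) : IsUnit M :=
  ⟨Units.oneSub (1 - M) h, by show (1 - (1 - M)) = M; simp⟩

private lemma aux_mul_le {n : ℕ} {X Y : Matrix (Fin n) (Fin n) ℝ} {a b : ℝ}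
    (ha : 0 ≤ a) (hX : ‖X‖ ≤ a) (hY : ‖Y‖ ≤ b) : ‖X * Y‖ ≤ a * b :=
  (norm_mul_le X Y).trans (mul_le_mul hX hY (norm_nonneg _) ha)

private lemma aux_inv_norm {n : ℕ} {M : Matrix (Fin n) (Fin n) ℝ} {μ : ℝ} (hμ1 : μ < 1)
    (hM : M * M⁻¹ = 1) (h : ‖1 - M‖ ≤ μ) : ‖M⁻¹‖ ≤ (1 - μ)⁻¹ := by
  have h1μ : (0 : ℝ) < 1 - μ := by linarith
  have hid : (1 - M) * M⁻¹ = M⁻¹ - 1 := by rw [sub_mul, one_mul, hM]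
  have h2 : ‖M⁻¹‖ ≤ 1 + μ * ‖M⁻¹‖ := by
    have : M⁻¹ = 1 + (1 - M) * M⁻¹ := by rw [hid]; abel
    calc ‖M⁻¹‖ = ‖(1 : Matrix (Fin n) (Fin n) ℝ) + (1 - M) * M⁻¹‖ := by rw [← this]
      _ ≤ ‖(1 : Matrix (Fin n) (Fin n) ℝ)‖ + ‖(1 - M) * M⁻¹‖ := norm_add_le _ _
      _ ≤ 1 + μ * ‖M⁻¹‖ := by
          gcongr
          · exact aux_norm_one n
          · exact (norm_mul_le _ _).trans
              (mul_le_mul_of_nonneg_right h (norm_nonneg _))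
  rw [show (1 - μ)⁻¹ = 1 / (1 - μ) by ring, le_div_iff₀ h1μ]
  nlinarith [norm_nonneg M⁻¹]

private lemma aux_real (μ ε δ : ℝ) (hμ0 : 0 ≤ μ) (hμ1 : μ < 1)
    (hε : 0 ≤ ε) (hδ : 0 ≤ δ) (hsum : δ + ε ≤ μ) :
    (δ * δ + δ * δ) * ((1-μ)⁻¹ * ε * (1-μ)⁻¹ * (1-μ)⁻¹ + (1-μ)⁻¹ * ((1-μ)⁻¹ * ε * (1-μ)⁻¹))
      + (2 * (δ * ε) + 2 * (ε * (δ + ε))) * ((1-μ)⁻¹ * (1-μ)⁻¹) ≤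
      ((16 - 12 * μ + 4 * μ ^ 2) / (1 - μ) ^ 3) * δ * ε +
      ((7 - 9 * μ + 13 * μ ^ 2 - 3 * μ ^ 3) / (1 - μ) ^ 4) * ε ^ 2 := by
  have h1μ : (0 : ℝ) < 1 - μ := by linarith
  have h4 : (0 : ℝ) < (1 - μ) ^ 4 := by positivity
  have hδμ : δ ≤ μ := by linarith
  have hδε : 0 ≤ δ * ε := mul_nonneg hδ hε
  have eL : (δ * δ + δ * δ) * ((1-μ)⁻¹ * ε * (1-μ)⁻¹ * (1-μ)⁻¹ + (1-μ)⁻¹ * ((1-μ)⁻¹ * ε * (1-μ)⁻¹))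
      + (2 * (δ * ε) + 2 * (ε * (δ + ε))) * ((1-μ)⁻¹ * (1-μ)⁻¹)
      = (4 * δ^2 * ε * (1-μ) + (4 * (δ*ε) + 2 * ε^2) * (1-μ)^2) / (1-μ)^4 := by
    field_simp
    ring
  have eR : ((16 - 12 * μ + 4 * μ ^ 2) / (1 - μ) ^ 3) * δ * ε +
      ((7 - 9 * μ + 13 * μ ^ 2 - 3 * μ ^ 3) / (1 - μ) ^ 4) * ε ^ 2
      = ((16 - 12 * μ + 4 * μ ^ 2) * (1-μ) * (δ*ε) + (7 - 9 * μ + 13 * μ ^ 2 - 3 * μ ^ 3) * ε^2)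
        / (1-μ)^4 := by
    field_simp
  rw [eL, eR, div_le_div_iff_of_pos_right h4]
  have t1 : 0 ≤ (12 - 12*μ + 4*μ^2) * (1-μ) * (δ*ε) := by
    have : (0:ℝ) ≤ 12 - 12*μ + 4*μ^2 := by nlinarith [sq_nonneg (2*μ - 3)]
    positivity
  have t2 : 0 ≤ (5 - 5*μ + 11*μ^2 - 3*μ^3) * ε^2 := by
    have : (0:ℝ) ≤ 5 - 5*μ + 11*μ^2 - 3*μ^3 := by
      nlinarith [mul_nonneg (mul_nonneg hμ0 hμ0) (by linarith : (0:ℝ) ≤ 11 - 3*μ)]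
    positivity
  have t3 : (1-μ) * (δ^2*ε) ≤ (1-μ) * (μ*(δ*ε)) := by
    have : δ^2*ε ≤ μ*(δ*ε) := by
      calc δ^2*ε = δ * (δ*ε) := by ring
        _ ≤ μ * (δ*ε) := mul_le_mul_of_nonneg_right hδμ hδε
    exact mul_le_mul_of_nonneg_left this h1μ.le
  nlinarith [t1, t2, t3]

/-- **Quantitative perturbation lemma for group commutators of matrices.**
If `‖V − Ṽ‖, ‖W − W̃‖ ≤ ε`, `‖V − I‖, ‖W − I‖ ≤ δ` and `δ + ε ≤ μ < 1`, then all four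
matrices are invertible and the group commutators differ in operator norm by at most
`((16 − 12μ + 4μ²)/(1−μ)³)·δε + ((7 − 9μ + 13μ² − 3μ³)/(1−μ)⁴)·ε²`. -/
theorem commutator_perturbation_bound
    (n : ℕ) (μ ε δ : ℝ) (hμ : μ ∈ Set.Ico (0 : ℝ) 1)
    (hε : 0 ≤ ε) (hδ : 0 ≤ δ) (hsum : δ + ε ≤ μ)
    (V W Vt Wt : Matrix (Fin n) (Fin n) ℝ)
    (hVVt : ‖V - Vt‖ ≤ ε) (hWWt : ‖W - Wt‖ ≤ ε)
    (hVI : ‖V - 1‖ ≤ δ) (hWI : ‖W - 1‖ ≤ δ) :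
    IsUnit V ∧ IsUnit W ∧ IsUnit Vt ∧ IsUnit Wt ∧
    ‖V * W * V⁻¹ * W⁻¹ - Vt * Wt * Vt⁻¹ * Wt⁻¹‖ ≤
      ((16 - 12 * μ + 4 * μ ^ 2) / (1 - μ) ^ 3) * δ * ε +
      ((7 - 9 * μ + 13 * μ ^ 2 - 3 * μ ^ 3) / (1 - μ) ^ 4) * ε ^ 2 := by
  obtain ⟨hμ0, hμ1⟩ := hμ
  have hδμ : δ ≤ μ := by linarith
  have h1μ : (0 : ℝ) < 1 - μ := by linarith
  -- basic norm facts
  have hVI' : ‖1 - V‖ ≤ δ := by rwa [norm_sub_rev] at hVI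
  have hWI' : ‖1 - W‖ ≤ δ := by rwa [norm_sub_rev] at hWI
  have hVtI' : ‖1 - Vt‖ ≤ δ + ε := by
    calc ‖(1 : Matrix (Fin n) (Fin n) ℝ) - Vt‖ = ‖(1 - V) + (V - Vt)‖ := by
          congr 1; abel
      _ ≤ ‖1 - V‖ + ‖V - Vt‖ := norm_add_le _ _
      _ ≤ δ + ε := add_le_add hVI' hVVt
  have hWtI' : ‖1 - Wt‖ ≤ δ + ε := by
    calc ‖(1 : Matrix (Fin n) (Fin n) ℝ) - Wt‖ = ‖(1 - W) + (W - Wt)‖ := by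
          congr 1; abel
      _ ≤ ‖1 - W‖ + ‖W - Wt‖ := norm_add_le _ _
      _ ≤ δ + ε := add_le_add hWI' hWWt
  -- units
  have hVu : IsUnit V := aux_isUnit (lt_of_le_of_lt hVI' (by linarith))
  have hWu : IsUnit W := aux_isUnit (lt_of_le_of_lt hWI' (by linarith))
  have hVtu : IsUnit Vt := aux_isUnit (lt_of_le_of_lt hVtI' (by linarith))
  have hWtu : IsUnit Wt := aux_isUnit (lt_of_le_of_lt hWtI' (by linarith))
  refine ⟨hVu, hWu, hVtu, hWtu, ?_⟩
  -- cancellation identities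
  have hv : V * V⁻¹ = 1 := Matrix.mul_nonsing_inv V ((Matrix.isUnit_iff_isUnit_det V).mp hVu)
  have hv' : V⁻¹ * V = 1 := Matrix.nonsing_inv_mul V ((Matrix.isUnit_iff_isUnit_det V).mp hVu)
  have hw : W * W⁻¹ = 1 := Matrix.mul_nonsing_inv W ((Matrix.isUnit_iff_isUnit_det W).mp hWu)
  have hvt : Vt * Vt⁻¹ = 1 := Matrix.mul_nonsing_inv Vt ((Matrix.isUnit_iff_isUnit_det Vt).mp hVtu)
  have hwt : Wt * Wt⁻¹ = 1 := Matrix.mul_nonsing_inv Wt ((Matrix.isUnit_iff_isUnit_det Wt).mp hWtu)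
  have hw' : W⁻¹ * W = 1 := Matrix.nonsing_inv_mul W ((Matrix.isUnit_iff_isUnit_det W).mp hWu)
  -- inverse norm bounds
  set r : ℝ := (1 - μ)⁻¹ with hr
  have hr0 : 0 ≤ r := by positivity
  have hVinv : ‖V⁻¹‖ ≤ r := aux_inv_norm hμ1 hv (hVI'.trans hδμ)
  have hWinv : ‖W⁻¹‖ ≤ r := aux_inv_norm hμ1 hw (hWI'.trans hδμ)
  have hVtinv : ‖Vt⁻¹‖ ≤ r := aux_inv_norm hμ1 hvt (hVtI'.trans hsum)
  have hWtinv : ‖Wt⁻¹‖ ≤ r := aux_inv_norm hμ1 hwt (hWtI'.trans hsum)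
  -- abbreviations
  set A : Matrix (Fin n) (Fin n) ℝ := V * W - W * V with hA
  set At : Matrix (Fin n) (Fin n) ℝ := Vt * Wt - Wt * Vt with hAt
  set P : Matrix (Fin n) (Fin n) ℝ := V⁻¹ * W⁻¹ with hP
  set Pt : Matrix (Fin n) (Fin n) ℝ := Vt⁻¹ * Wt⁻¹ with hPt
  -- key decomposition
  have e1 : A * P = V * W * V⁻¹ * W⁻¹ - 1 := by
    have c1 : W * V * (V⁻¹ * W⁻¹) = 1 := by
      rw [mul_assoc, ← mul_assoc V, hv, one_mul, hw]
    calc A * P = V * W * (V⁻¹ * W⁻¹) - W * V * (V⁻¹ * W⁻¹) := by rw [hA, hP, sub_mul]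
      _ = V * W * V⁻¹ * W⁻¹ - 1 := by rw [c1, ← mul_assoc]
  have e2 : At * Pt = Vt * Wt * Vt⁻¹ * Wt⁻¹ - 1 := by
    have c1 : Wt * Vt * (Vt⁻¹ * Wt⁻¹) = 1 := by
      rw [mul_assoc, ← mul_assoc Vt, hvt, one_mul, hwt]
    calc At * Pt = Vt * Wt * (Vt⁻¹ * Wt⁻¹) - Wt * Vt * (Vt⁻¹ * Wt⁻¹) := by
          rw [hAt, hPt, sub_mul]
      _ = Vt * Wt * Vt⁻¹ * Wt⁻¹ - 1 := by rw [c1, ← mul_assoc]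
  have key : V * W * V⁻¹ * W⁻¹ - Vt * Wt * Vt⁻¹ * Wt⁻¹ = A * (P - Pt) + (A - At) * Pt := by
    have d1 : V * W * V⁻¹ * W⁻¹ = A * P + 1 := by rw [e1]; abel
    have d2 : Vt * Wt * Vt⁻¹ * Wt⁻¹ = At * Pt + 1 := by rw [e2]; abel
    rw [d1, d2]
    noncomm_ring
  -- bound on A
  have bA : ‖A‖ ≤ δ * δ + δ * δ := by
    have idA : A = (V - 1) * (W - 1) - (W - 1) * (V - 1) := by rw [hA]; noncomm_ring
    calc ‖A‖ = ‖(V - 1) * (W - 1) - (W - 1) * (V - 1)‖ := by rw [idA]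
      _ ≤ ‖(V - 1) * (W - 1)‖ + ‖(W - 1) * (V - 1)‖ := norm_sub_le _ _
      _ ≤ δ * δ + δ * δ := add_le_add (aux_mul_le hδ hVI hWI) (aux_mul_le hδ hWI hVI)
  -- bound on A - At
  have hVtI2 : ‖Vt - 1‖ ≤ δ + ε := by rwa [norm_sub_rev] at hVtI'
  have hWtI2 : ‖Wt - 1‖ ≤ δ + ε := by rwa [norm_sub_rev] at hWtI'
  have bAd : ‖A - At‖ ≤ 2 * (δ * ε) + 2 * (ε * (δ + ε)) := by
    have idAd : A - At = ((V - 1) * (W - Wt) + (V - Vt) * (Wt - 1)) -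
        ((W - 1) * (V - Vt) + (W - Wt) * (Vt - 1)) := by
      rw [hA, hAt]; noncomm_ring
    calc ‖A - At‖ = ‖((V - 1) * (W - Wt) + (V - Vt) * (Wt - 1)) -
        ((W - 1) * (V - Vt) + (W - Wt) * (Vt - 1))‖ := by rw [idAd]
      _ ≤ ‖(V - 1) * (W - Wt) + (V - Vt) * (Wt - 1)‖ +
          ‖(W - 1) * (V - Vt) + (W - Wt) * (Vt - 1)‖ := norm_sub_le _ _
      _ ≤ (‖(V - 1) * (W - Wt)‖ + ‖(V - Vt) * (Wt - 1)‖) +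
          (‖(W - 1) * (V - Vt)‖ + ‖(W - Wt) * (Vt - 1)‖) :=
            add_le_add (norm_add_le _ _) (norm_add_le _ _)
      _ ≤ (δ * ε + ε * (δ + ε)) + (δ * ε + ε * (δ + ε)) := by
            refine add_le_add (add_le_add ?_ ?_) (add_le_add ?_ ?_)
            · exact aux_mul_le hδ hVI hWWt
            · exact aux_mul_le hε hVVt hWtI2
            · exact aux_mul_le hδ hWI hVVt
            · exact aux_mul_le hε hWWt hVtI2
      _ = 2 * (δ * ε) + 2 * (ε * (δ + ε)) := by ring
  -- bound on inverse differences
  have bVinvd : ‖V⁻¹ - Vt⁻¹‖ ≤ r * ε * r := by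
    have idV : V⁻¹ - Vt⁻¹ = V⁻¹ * (Vt - V) * Vt⁻¹ := by
      have h0 : V⁻¹ * (Vt - V) * Vt⁻¹ = V⁻¹ * (Vt * Vt⁻¹) - (V⁻¹ * V) * Vt⁻¹ := by
        noncomm_ring
      rw [h0, hvt, hv', mul_one, one_mul]
    have hVtV : ‖Vt - V‖ ≤ ε := by rwa [norm_sub_rev] at hVVt
    calc ‖V⁻¹ - Vt⁻¹‖ = ‖V⁻¹ * (Vt - V) * Vt⁻¹‖ := by rw [idV]
      _ ≤ r * ε * r := aux_mul_le (by positivity)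
            (aux_mul_le hr0 hVinv hVtV) hVtinv
  have bWinvd : ‖W⁻¹ - Wt⁻¹‖ ≤ r * ε * r := by
    have idW : W⁻¹ - Wt⁻¹ = W⁻¹ * (Wt - W) * Wt⁻¹ := by
      have h0 : W⁻¹ * (Wt - W) * Wt⁻¹ = W⁻¹ * (Wt * Wt⁻¹) - (W⁻¹ * W) * Wt⁻¹ := by
        noncomm_ring
      rw [h0, hwt, hw', mul_one, one_mul]
    have hWtW : ‖Wt - W‖ ≤ ε := by rwa [norm_sub_rev] at hWWt
    calc ‖W⁻¹ - Wt⁻¹‖ = ‖W⁻¹ * (Wt - W) * Wt⁻¹‖ := by rw [idW]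
      _ ≤ r * ε * r := aux_mul_le (by positivity)
            (aux_mul_le hr0 hWinv hWtW) hWtinv
  -- bound on P - Pt
  have bPd : ‖P - Pt‖ ≤ r * ε * r * r + r * (r * ε * r) := by
    have idP : P - Pt = (V⁻¹ - Vt⁻¹) * W⁻¹ + Vt⁻¹ * (W⁻¹ - Wt⁻¹) := by
      rw [hP, hPt]; noncomm_ring
    calc ‖P - Pt‖ = ‖(V⁻¹ - Vt⁻¹) * W⁻¹ + Vt⁻¹ * (W⁻¹ - Wt⁻¹)‖ := by rw [idP]
      _ ≤ ‖(V⁻¹ - Vt⁻¹) * W⁻¹‖ + ‖Vt⁻¹ * (W⁻¹ - Wt⁻¹)‖ := norm_add_le _ _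
      _ ≤ r * ε * r * r + r * (r * ε * r) := add_le_add
            (aux_mul_le (by positivity) bVinvd hWinv)
            (aux_mul_le hr0 hVtinv bWinvd)
  have bPt : ‖Pt‖ ≤ r * r := aux_mul_le hr0 hVtinv hWtinv
  -- assemble
  calc ‖V * W * V⁻¹ * W⁻¹ - Vt * Wt * Vt⁻¹ * Wt⁻¹‖
      = ‖A * (P - Pt) + (A - At) * Pt‖ := by rw [key]
    _ ≤ ‖A * (P - Pt)‖ + ‖(A - At) * Pt‖ := norm_add_le _ _
    _ ≤ (δ * δ + δ * δ) * (r * ε * r * r + r * (r * ε * r)) +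
        (2 * (δ * ε) + 2 * (ε * (δ + ε))) * (r * r) := add_le_add
          (aux_mul_le (by positivity) bA bPd)
          (aux_mul_le (by positivity) bAd bPt)
    _ ≤ ((16 - 12 * μ + 4 * μ ^ 2) / (1 - μ) ^ 3) * δ * ε +
        ((7 - 9 * μ + 13 * μ ^ 2 - 3 * μ ^ 3) / (1 - μ) ^ 4) * ε ^ 2 :=
          aux_real μ ε δ hμ0 hμ1 hε hδ hsum
end

section
/- Let ε, δ ≥ 0 satisfy δ + ε ≤ 1/5. Let V, W, Ṽ, W̃ be real n×n matrices such that ‖V − Ṽ‖_∞ ≤ ε, ‖W − W̃‖_∞ ≤ ε, ‖V − I‖_∞ ≤ δ and ‖W − I‖_∞ ≤ δ. Then V, W, Ṽ, W̃ are all invertible and ‖VWV⁻¹W⁻¹ − ṼW̃Ṽ⁻¹W̃⁻¹‖_∞ ≤ 27·δ·ε + 14·ε². -/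
open Matrix
open scoped Matrix.Norms.L2Operator

section Aux

variable {n : ℕ}

private lemma norm_one_le_aux : ‖(1 : Matrix (Fin n) (Fin n) ℝ)‖ ≤ 1 := by
  rw [Matrix.cstar_norm_def, _root_.map_one, ContinuousLinearMap.one_def]
  exact ContinuousLinearMap.norm_id_le

private lemma isUnit_aux (A : Matrix (Fin n) (Fin n) ℝ) (h : ‖A - 1‖ < 1) : IsUnit A := by
  have h' : ‖(1 : Matrix (Fin n) (Fin n) ℝ) - A‖ < 1 := by rwa [norm_sub_rev] at h
  have := isUnit_one_sub_of_norm_lt_one h'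
  rwa [sub_sub_cancel] at this

private lemma inv_mul_aux (A : Matrix (Fin n) (Fin n) ℝ) (hA : IsUnit A) : A⁻¹ * A = 1 :=
  Matrix.nonsing_inv_mul A ((Matrix.isUnit_iff_isUnit_det A).mp hA)

private lemma mul_inv_aux (A : Matrix (Fin n) (Fin n) ℝ) (hA : IsUnit A) : A * A⁻¹ = 1 :=
  Matrix.mul_nonsing_inv A ((Matrix.isUnit_iff_isUnit_det A).mp hA)

private lemma inv_norm_le_aux (A : Matrix (Fin n) (Fin n) ℝ) (hA : IsUnit A)
    (h : ‖A - 1‖ ≤ 1 / 5) : ‖A⁻¹‖ ≤ 5 / 4 := by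
  have e : (1 : Matrix (Fin n) (Fin n) ℝ) + A⁻¹ * (1 - A) = A⁻¹ := by
    have h1 : A⁻¹ * A = 1 := inv_mul_aux A hA
    have h2 : (1 : Matrix (Fin n) (Fin n) ℝ) + A⁻¹ * (1 - A)
        = 1 + A⁻¹ - A⁻¹ * A := by noncomm_ring
    rw [h2, h1]; abel
  have hb : ‖A⁻¹‖ ≤ 1 + ‖A⁻¹‖ * (1 / 5) := by
    calc ‖A⁻¹‖ = ‖(1 : Matrix (Fin n) (Fin n) ℝ) + A⁻¹ * (1 - A)‖ := by rw [e]
    _ ≤ ‖(1 : Matrix (Fin n) (Fin n) ℝ)‖ + ‖A⁻¹ * (1 - A)‖ := norm_add_le _ _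
    _ ≤ 1 + ‖A⁻¹‖ * ‖(1 : Matrix (Fin n) (Fin n) ℝ) - A‖ :=
        add_le_add norm_one_le_aux (norm_mul_le _ _)
    _ ≤ 1 + ‖A⁻¹‖ * (1 / 5) := by
        have : ‖(1 : Matrix (Fin n) (Fin n) ℝ) - A‖ = ‖A - 1‖ := norm_sub_rev _ _
        rw [this]
        exact add_le_add (le_refl 1) (mul_le_mul_of_nonneg_left h (norm_nonneg _))
  linarith

private lemma inv_sub_inv_aux (A B : Matrix (Fin n) (Fin n) ℝ) (hA : IsUnit A) (hB : IsUnit B) :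
    A⁻¹ - B⁻¹ = A⁻¹ * (B - A) * B⁻¹ := by
  have h1 : A⁻¹ * A = 1 := inv_mul_aux A hA
  have h2 : B * B⁻¹ = 1 := mul_inv_aux B hB
  have e : A⁻¹ * (B - A) * B⁻¹ = A⁻¹ * (B * B⁻¹) - (A⁻¹ * A) * B⁻¹ := by noncomm_ring
  rw [e, h1, h2, mul_one, one_mul]

end Aux

set_option maxHeartbeats 1000000 in
/-- **Perturbation lemma for group commutators, case `μ = 1/5`.**
If `‖V − Ṽ‖, ‖W − W̃‖ ≤ ε`, `‖V − I‖, ‖W − I‖ ≤ δ` and `δ + ε ≤ 1/5`, then all four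
matrices are invertible and
`‖[V,W] − [Ṽ,W̃]‖ ≤ 27δε + 14ε²`. -/
theorem commutator_perturbation_bound_one_fifth
    (n : ℕ) (ε δ : ℝ) (hε : 0 ≤ ε) (hδ : 0 ≤ δ) (hsum : δ + ε ≤ 1 / 5)
    (V W Vt Wt : Matrix (Fin n) (Fin n) ℝ)
    (hVVt : ‖V - Vt‖ ≤ ε) (hWWt : ‖W - Wt‖ ≤ ε)
    (hVI : ‖V - 1‖ ≤ δ) (hWI : ‖W - 1‖ ≤ δ) :
    IsUnit V ∧ IsUnit W ∧ IsUnit Vt ∧ IsUnit Wt ∧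
    ‖V * W * V⁻¹ * W⁻¹ - Vt * Wt * Vt⁻¹ * Wt⁻¹‖ ≤ 27 * δ * ε + 14 * ε ^ 2 := by
  have hδ5 : δ ≤ 1 / 5 := by linarith
  have hVtI : ‖Vt - 1‖ ≤ δ + ε := by
    calc ‖Vt - 1‖ = ‖(V - 1) - (V - Vt)‖ := by congr 1; abel
    _ ≤ ‖V - 1‖ + ‖V - Vt‖ := norm_sub_le _ _
    _ ≤ δ + ε := add_le_add hVI hVVt
  have hWtI : ‖Wt - 1‖ ≤ δ + ε := by
    calc ‖Wt - 1‖ = ‖(W - 1) - (W - Wt)‖ := by congr 1; abel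
    _ ≤ ‖W - 1‖ + ‖W - Wt‖ := norm_sub_le _ _
    _ ≤ δ + ε := add_le_add hWI hWWt
  have hV : IsUnit V := isUnit_aux V (by linarith)
  have hW : IsUnit W := isUnit_aux W (by linarith)
  have hVt : IsUnit Vt := isUnit_aux Vt (by linarith)
  have hWt : IsUnit Wt := isUnit_aux Wt (by linarith)
  refine ⟨hV, hW, hVt, hWt, ?_⟩
  -- norms of inverses
  have hVi : ‖V⁻¹‖ ≤ 5 / 4 := inv_norm_le_aux V hV (le_trans hVI hδ5)
  have hWi : ‖W⁻¹‖ ≤ 5 / 4 := inv_norm_le_aux W hW (le_trans hWI hδ5)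
  have hVti : ‖Vt⁻¹‖ ≤ 5 / 4 := inv_norm_le_aux Vt hVt (le_trans hVtI hsum)
  have hWti : ‖Wt⁻¹‖ ≤ 5 / 4 := inv_norm_le_aux Wt hWt (le_trans hWtI hsum)
  -- differences of inverses
  have hVdiff : ‖V⁻¹ - Vt⁻¹‖ ≤ 5 / 4 * ε * (5 / 4) := by
    rw [inv_sub_inv_aux V Vt hV hVt]
    calc ‖V⁻¹ * (Vt - V) * Vt⁻¹‖ ≤ ‖V⁻¹ * (Vt - V)‖ * ‖Vt⁻¹‖ := norm_mul_le _ _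
    _ ≤ (‖V⁻¹‖ * ‖Vt - V‖) * ‖Vt⁻¹‖ :=
        mul_le_mul_of_nonneg_right (norm_mul_le _ _) (norm_nonneg _)
    _ ≤ 5 / 4 * ε * (5 / 4) := by
        have h1 : ‖Vt - V‖ ≤ ε := by rwa [norm_sub_rev] at hVVt
        have h2 : ‖V⁻¹‖ * ‖Vt - V‖ ≤ 5 / 4 * ε :=
          mul_le_mul hVi h1 (norm_nonneg _) (by norm_num)
        exact mul_le_mul h2 hVti (norm_nonneg _) (by positivity)
  have hWdiff : ‖W⁻¹ - Wt⁻¹‖ ≤ 5 / 4 * ε * (5 / 4) := by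
    rw [inv_sub_inv_aux W Wt hW hWt]
    calc ‖W⁻¹ * (Wt - W) * Wt⁻¹‖ ≤ ‖W⁻¹ * (Wt - W)‖ * ‖Wt⁻¹‖ := norm_mul_le _ _
    _ ≤ (‖W⁻¹‖ * ‖Wt - W‖) * ‖Wt⁻¹‖ :=
        mul_le_mul_of_nonneg_right (norm_mul_le _ _) (norm_nonneg _)
    _ ≤ 5 / 4 * ε * (5 / 4) := by
        have h1 : ‖Wt - W‖ ≤ ε := by rwa [norm_sub_rev] at hWWt
        have h2 : ‖W⁻¹‖ * ‖Wt - W‖ ≤ 5 / 4 * ε :=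
          mul_le_mul hWi h1 (norm_nonneg _) (by norm_num)
        exact mul_le_mul h2 hWti (norm_nonneg _) (by positivity)
  -- product of inverses
  have hP : ‖V⁻¹ * W⁻¹‖ ≤ 25 / 16 := by
    calc ‖V⁻¹ * W⁻¹‖ ≤ ‖V⁻¹‖ * ‖W⁻¹‖ := norm_mul_le _ _
    _ ≤ 25 / 16 := by nlinarith [norm_nonneg V⁻¹, norm_nonneg W⁻¹]
  have hPdiff : ‖V⁻¹ * W⁻¹ - Vt⁻¹ * Wt⁻¹‖ ≤ 125 / 32 * ε := by
    have e : V⁻¹ * W⁻¹ - Vt⁻¹ * Wt⁻¹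
        = (V⁻¹ - Vt⁻¹) * W⁻¹ + Vt⁻¹ * (W⁻¹ - Wt⁻¹) := by noncomm_ring
    rw [e]
    calc ‖(V⁻¹ - Vt⁻¹) * W⁻¹ + Vt⁻¹ * (W⁻¹ - Wt⁻¹)‖
        ≤ ‖(V⁻¹ - Vt⁻¹) * W⁻¹‖ + ‖Vt⁻¹ * (W⁻¹ - Wt⁻¹)‖ := norm_add_le _ _
    _ ≤ ‖V⁻¹ - Vt⁻¹‖ * ‖W⁻¹‖ + ‖Vt⁻¹‖ * ‖W⁻¹ - Wt⁻¹‖ :=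
        add_le_add (norm_mul_le _ _) (norm_mul_le _ _)
    _ ≤ (5 / 4 * ε * (5 / 4)) * (5 / 4) + (5 / 4) * (5 / 4 * ε * (5 / 4)) := by
        have h1 := mul_le_mul hVdiff hWi (norm_nonneg _) (by positivity)
        have h2 := mul_le_mul hVti hWdiff (norm_nonneg _) (by norm_num)
        linarith
    _ = 125 / 32 * ε := by ring
  -- commutator identities
  have hcommV : V * W * V⁻¹ * W⁻¹ = 1 + (V * W - W * V) * (V⁻¹ * W⁻¹) := by
    have e : (V * W - W * V) * (V⁻¹ * W⁻¹)
        = V * W * V⁻¹ * W⁻¹ - W * (V * V⁻¹) * W⁻¹ := by noncomm_ring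
    rw [e, mul_inv_aux V hV, mul_one, mul_inv_aux W hW]
    abel
  have hcommVt : Vt * Wt * Vt⁻¹ * Wt⁻¹ = 1 + (Vt * Wt - Wt * Vt) * (Vt⁻¹ * Wt⁻¹) := by
    have e : (Vt * Wt - Wt * Vt) * (Vt⁻¹ * Wt⁻¹)
        = Vt * Wt * Vt⁻¹ * Wt⁻¹ - Wt * (Vt * Vt⁻¹) * Wt⁻¹ := by noncomm_ring
    rw [e, mul_inv_aux Vt hVt, mul_one, mul_inv_aux Wt hWt]
    abel
  -- bound on the commutator difference of the "linear parts"
  have hCdiff : ‖(V * W - W * V) - (Vt * Wt - Wt * Vt)‖ ≤ 4 * δ * ε + 2 * ε ^ 2 := by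
    have e : (V * W - W * V) - (Vt * Wt - Wt * Vt)
        = ((V - Vt) * (W - 1) - (W - 1) * (V - Vt))
          + ((Vt - 1) * (W - Wt) - (W - Wt) * (Vt - 1)) := by noncomm_ring
    rw [e]
    have b1 : ‖(V - Vt) * (W - 1)‖ ≤ ε * δ :=
      le_trans (norm_mul_le _ _) (mul_le_mul hVVt hWI (norm_nonneg _) hε)
    have b2 : ‖(W - 1) * (V - Vt)‖ ≤ δ * ε :=
      le_trans (norm_mul_le _ _) (mul_le_mul hWI hVVt (norm_nonneg _) hδ)
    have b3 : ‖(Vt - 1) * (W - Wt)‖ ≤ (δ + ε) * ε :=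
      le_trans (norm_mul_le _ _) (mul_le_mul hVtI hWWt (norm_nonneg _) (by linarith))
    have b4 : ‖(W - Wt) * (Vt - 1)‖ ≤ ε * (δ + ε) :=
      le_trans (norm_mul_le _ _) (mul_le_mul hWWt hVtI (norm_nonneg _) hε)
    calc ‖((V - Vt) * (W - 1) - (W - 1) * (V - Vt))
          + ((Vt - 1) * (W - Wt) - (W - Wt) * (Vt - 1))‖
        ≤ ‖(V - Vt) * (W - 1) - (W - 1) * (V - Vt)‖
          + ‖(Vt - 1) * (W - Wt) - (W - Wt) * (Vt - 1)‖ := norm_add_le _ _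
    _ ≤ (‖(V - Vt) * (W - 1)‖ + ‖(W - 1) * (V - Vt)‖)
          + (‖(Vt - 1) * (W - Wt)‖ + ‖(W - Wt) * (Vt - 1)‖) :=
        add_le_add (norm_sub_le _ _) (norm_sub_le _ _)
    _ ≤ (ε * δ + δ * ε) + ((δ + ε) * ε + ε * (δ + ε)) := by linarith
    _ = 4 * δ * ε + 2 * ε ^ 2 := by ring
  -- bound on the perturbed commutator linear part
  have hCt : ‖Vt * Wt - Wt * Vt‖ ≤ 2 * (δ + ε) ^ 2 := by
    have e : Vt * Wt - Wt * Vt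
        = (Vt - 1) * (Wt - 1) - (Wt - 1) * (Vt - 1) := by noncomm_ring
    rw [e]
    have b1 : ‖(Vt - 1) * (Wt - 1)‖ ≤ (δ + ε) * (δ + ε) :=
      le_trans (norm_mul_le _ _) (mul_le_mul hVtI hWtI (norm_nonneg _) (by linarith))
    have b2 : ‖(Wt - 1) * (Vt - 1)‖ ≤ (δ + ε) * (δ + ε) :=
      le_trans (norm_mul_le _ _) (mul_le_mul hWtI hVtI (norm_nonneg _) (by linarith))
    calc ‖(Vt - 1) * (Wt - 1) - (Wt - 1) * (Vt - 1)‖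
        ≤ ‖(Vt - 1) * (Wt - 1)‖ + ‖(Wt - 1) * (Vt - 1)‖ := norm_sub_le _ _
    _ ≤ (δ + ε) * (δ + ε) + (δ + ε) * (δ + ε) := add_le_add b1 b2
    _ = 2 * (δ + ε) ^ 2 := by ring
  -- main decomposition
  have key : V * W * V⁻¹ * W⁻¹ - Vt * Wt * Vt⁻¹ * Wt⁻¹
      = ((V * W - W * V) - (Vt * Wt - Wt * Vt)) * (V⁻¹ * W⁻¹)
        + (Vt * Wt - Wt * Vt) * (V⁻¹ * W⁻¹ - Vt⁻¹ * Wt⁻¹) := by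
    rw [hcommV, hcommVt]; noncomm_ring
  rw [key]
  have t1 : ‖((V * W - W * V) - (Vt * Wt - Wt * Vt)) * (V⁻¹ * W⁻¹)‖
      ≤ (4 * δ * ε + 2 * ε ^ 2) * (25 / 16) :=
    le_trans (norm_mul_le _ _) (mul_le_mul hCdiff hP (norm_nonneg _) (by positivity))
  have t2 : ‖(Vt * Wt - Wt * Vt) * (V⁻¹ * W⁻¹ - Vt⁻¹ * Wt⁻¹)‖
      ≤ (2 * (δ + ε) ^ 2) * (125 / 32 * ε) :=
    le_trans (norm_mul_le _ _) (mul_le_mul hCt hPdiff (norm_nonneg _) (by positivity))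
  have hadd := norm_add_le (((V * W - W * V) - (Vt * Wt - Wt * Vt)) * (V⁻¹ * W⁻¹))
    ((Vt * Wt - Wt * Vt) * (V⁻¹ * W⁻¹ - Vt⁻¹ * Wt⁻¹))
  have hfin : (4 * δ * ε + 2 * ε ^ 2) * (25 / 16) + (2 * (δ + ε) ^ 2) * (125 / 32 * ε)
      ≤ 27 * δ * ε + 14 * ε ^ 2 := by
    nlinarith [mul_nonneg hδ hε, mul_nonneg (mul_nonneg hδ hε) hε, sq_nonneg (δ + ε),
      mul_nonneg (mul_nonneg hδ hδ) hε, mul_nonneg (mul_nonneg hε hε) hε,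
      mul_nonneg (sq_nonneg (δ + ε)) hε]
  linarith
end

section
/- Let m ≥ 1 and let P ∈ Sp_{2m}(ℝ) be symmetric and positive definite, with (positive) eigenvalues λ₁, …, λ_{2m}. Then Σ_{i=1}^{2m} (ln λ_i)² ≤ ‖P‖_∞² · Σ_{i=1}^{2m} (λ_i − 1)². Equivalently, ‖ln P‖₂ ≤ ‖P‖_∞ · ‖P − I‖₂, where ln P is the matrix logarithm of P and ‖·‖₂ the Hilbert–Schmidt (Frobenius) norm. -/
open Matrix
open scoped Matrix.Norms.L2Operator
open scoped RealInnerProductSpace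

/-- The symplectic form is orthogonal: `Ωᵀ Ω = 1`. -/
lemma symplecticForm_transpose_mul (m : ℕ) :
    (symplecticForm m)ᵀ * symplecticForm m = 1 := by
  have h2 : (!![0, 1; -1, 0] : Matrix (Fin 2) (Fin 2) ℝ)ᵀ * !![0, 1; -1, 0] = 1 := by
    ext i j
    fin_cases i <;> fin_cases j <;>
      simp [Matrix.mul_apply, Fin.sum_univ_two, Matrix.one_apply, Matrix.transpose_apply,
        Matrix.vecHead, Matrix.vecTail]
  unfold symplecticForm
  rw [Matrix.blockDiagonal_transpose, ← Matrix.blockDiagonal_mul]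
  simp only [h2]
  exact Matrix.blockDiagonal_one

/-- `Ω` preserves the euclidean dot product. -/
lemma symplecticForm_dotProduct (m : ℕ) (x : Fin 2 × Fin m → ℝ) :
    (symplecticForm m *ᵥ x) ⬝ᵥ (symplecticForm m *ᵥ x) = x ⬝ᵥ x := by
  rw [Matrix.dotProduct_mulVec, ← Matrix.mulVec_transpose, Matrix.mulVec_mulVec,
    symplecticForm_transpose_mul, Matrix.one_mulVec]

/-- Pointwise scalar inequality: if `0 < μ`, `μ ≤ c`, `μ⁻¹ ≤ c` then
`(log μ)² ≤ c² (μ - 1)²`. -/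
lemma aux_log_sq (μ c : ℝ) (hμ : 0 < μ) (h1 : μ ≤ c) (h2 : μ⁻¹ ≤ c) :
    (Real.log μ) ^ 2 ≤ c ^ 2 * (μ - 1) ^ 2 := by
  have habs : |Real.log μ| ≤ c * |μ - 1| := by
    rcases le_or_gt 1 μ with h | h
    · have hc1 : (1 : ℝ) ≤ c := le_trans h h1
      have hlog : Real.log μ ≤ μ - 1 := Real.log_le_sub_one_of_pos hμ
      rw [abs_of_nonneg (Real.log_nonneg h), abs_of_nonneg (by linarith)]
      nlinarith [Real.log_nonneg h]
    · have hlog : Real.log μ⁻¹ ≤ μ⁻¹ - 1 := Real.log_le_sub_one_of_pos (by positivity)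
      rw [Real.log_inv] at hlog
      rw [abs_of_nonpos (Real.log_nonpos hμ.le h.le), abs_of_neg (by linarith)]
      have h3 : μ⁻¹ * (1 - μ) ≤ c * (1 - μ) :=
        mul_le_mul_of_nonneg_right h2 (by linarith)
      have h4 : μ⁻¹ * μ = 1 := inv_mul_cancel₀ (ne_of_gt hμ)
      nlinarith
  calc (Real.log μ) ^ 2 = |Real.log μ| ^ 2 := (sq_abs _).symm
    _ ≤ (c * |μ - 1|) ^ 2 := by
        exact pow_le_pow_left₀ (abs_nonneg _) habs 2
    _ = c ^ 2 * (μ - 1) ^ 2 := by rw [mul_pow, sq_abs]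

/-- A unit eigenvector for eigenvalue `μ ≥ 0` gives `μ ≤ ‖A‖`. -/
lemma eigenvalue_le_opNorm {m : ℕ} (A : Matrix (Fin 2 × Fin m) (Fin 2 × Fin m) ℝ)
    (x : EuclideanSpace ℝ (Fin 2 × Fin m)) (μ : ℝ) (hμ : 0 ≤ μ) (hx : ‖x‖ = 1)
    (hvec : A *ᵥ x = μ • x) : μ ≤ ‖A‖ := by
  have h := A.l2_opNorm_mulVec x
  have hcast : (EuclideanSpace.equiv (Fin 2 × Fin m) ℝ).symm (A *ᵥ x) = μ • x := by
    rw [hvec]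
    rfl
  rw [hcast, norm_smul, hx, Real.norm_eq_abs, abs_of_nonneg hμ, mul_one, mul_one] at h
  exact h

/-- **Logarithm bound for positive-definite symplectic matrices.**
For a symmetric positive-definite symplectic `P` with eigenvalues `λ₁, …, λ_{2m}`,
`Σ (ln λᵢ)² ≤ ‖P‖_∞² · Σ (λᵢ − 1)²`, i.e. `‖ln P‖₂ ≤ ‖P‖_∞ · ‖P − I‖₂`. -/
theorem log_bound_positive_symplectic
    (m : ℕ) (hm : 1 ≤ m)
    (P : Matrix (Fin 2 × Fin m) (Fin 2 × Fin m) ℝ)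
    (hPsymp : IsSymplectic P) (hPpos : P.PosDef) :
    ∑ i, (Real.log (hPpos.1.eigenvalues i)) ^ 2 ≤
      ‖P‖ ^ 2 * ∑ i, (hPpos.1.eigenvalues i - 1) ^ 2 := by
  classical
  -- `P` is symmetric
  have hPt : Pᵀ = P := by
    have h := hPpos.1
    rwa [Matrix.IsHermitian, Matrix.conjTranspose_eq_transpose_of_trivial] at h
  -- `P Ω P = Ω`
  have hPOP : P * symplecticForm m * P = symplecticForm m := by
    have h := hPsymp
    unfold IsSymplectic at h
    rwa [hPt] at h
  rw [Finset.mul_sum]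
  apply Finset.sum_le_sum
  intro i _
  have hμpos : 0 < hPpos.1.eigenvalues i := hPpos.eigenvalues_pos i
  set μ : ℝ := hPpos.1.eigenvalues i with hμdef
  -- the unit eigenvector
  set v : EuclideanSpace ℝ (Fin 2 × Fin m) := hPpos.1.eigenvectorBasis i with hvdef
  have hvnorm : ‖v‖ = 1 := hPpos.1.eigenvectorBasis.orthonormal.1 i
  have hvec : P *ᵥ v = μ • v := hPpos.1.mulVec_eigenvectorBasis i
  -- `μ ≤ ‖P‖`
  have hle1 : μ ≤ ‖P‖ := eigenvalue_le_opNorm P v μ hμpos.le hvnorm hvec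
  -- `Ω v` is a unit eigenvector with eigenvalue `μ⁻¹`
  set w : EuclideanSpace ℝ (Fin 2 × Fin m) := WithLp.toLp 2 (symplecticForm m *ᵥ v) with hwdef
  have hwnorm : ‖w‖ = 1 := by
    have h1 : ⟪w, w⟫ = ‖w‖ ^ 2 := real_inner_self_eq_norm_sq w
    have h2 : ⟪v, v⟫ = ‖v‖ ^ 2 := real_inner_self_eq_norm_sq v
    have h3 : ⟪w, w⟫ = ⟪v, v⟫ := by
      rw [EuclideanSpace.inner_eq_star_dotProduct, EuclideanSpace.inner_eq_star_dotProduct]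
      have := symplecticForm_dotProduct m v.ofLp
      simpa [w, star_trivial] using this
    have h4 : ‖w‖ ^ 2 = 1 := by rw [← h1, h3, h2, hvnorm]; norm_num
    nlinarith [norm_nonneg w]
  have hwvec : P *ᵥ w = μ⁻¹ • w := by
    have key : symplecticForm m *ᵥ (v : EuclideanSpace ℝ (Fin 2 × Fin m))
        = μ • (P *ᵥ (symplecticForm m *ᵥ v)) := by
      conv_lhs => rw [← hPOP]
      rw [← Matrix.mulVec_mulVec, ← Matrix.mulVec_mulVec, hvec, Matrix.mulVec_smul,
        Matrix.mulVec_smul]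
    have h5 : μ⁻¹ • (symplecticForm m *ᵥ (v : EuclideanSpace ℝ (Fin 2 × Fin m)))
        = P *ᵥ (symplecticForm m *ᵥ v) := by
      conv_lhs => rw [key]
      rw [smul_smul, inv_mul_cancel₀ (ne_of_gt hμpos), one_smul]
    exact h5.symm
  -- `μ⁻¹ ≤ ‖P‖`
  have hle2 : μ⁻¹ ≤ ‖P‖ := eigenvalue_le_opNorm P w μ⁻¹ (by positivity) hwnorm hwvec
  exact aux_log_sq μ ‖P‖ hμpos hle1 hle2
end
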